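/- arXiv:2203.04236 — 8 statements merged into one kernel-verified Lean document; each statement's English description precedes it below -/
import Mathlib

section
/- Whitened matrix form of Lemma 3.3 (FQI error bound under a geometric decay assumption). Let A and Â be d×d real matrices and θ₀, θ̂₀ ∈ ℝᵈ. Suppose there are α > 0 and β ∈ (0,1) such that ‖Aᵏ‖ ≤ α·βᵏ for every natural number k. Set ε_op := ‖Â − A‖ and ε_r := ‖θ̂₀ − θ₀‖, and assume ε_op ≤ (1−β)/(2α). Then the series θ⋆ := ∑_{k=0}^∞ Aᵏθ₀ converges, and for every natural number T, ‖∑_{k=0}^T Âᵏθ̂₀ − θ⋆‖ ≤ (α/(1−β))·‖θ₀‖·β^{T+1} + (2α/(1−β))·( ε_r + ε_op·‖θ₀‖·α/(1−β) ). -/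
open scoped Matrix.Norms.L2Operator
open Matrix Finset

theorem aux_pow_sub_pow {R : Type*} [Ring R] (x y : R) (n : ℕ) :
    x ^ n - y ^ n = ∑ i ∈ Finset.range n, x ^ (n - 1 - i) * (x - y) * y ^ i := by
  induction n with
  | zero => simp
  | succ n ih =>
    rw [Finset.sum_range_succ]
    have h1 : ∀ i ∈ Finset.range n, x ^ (n + 1 - 1 - i) * (x - y) * y ^ i
        = x * (x ^ (n - 1 - i) * (x - y) * y ^ i) := by
      intro i hi
      rw [Finset.mem_range] at hi
      have h2 : n + 1 - 1 - i = (n - 1 - i) + 1 := by omega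
      rw [h2, pow_succ']
      simp [mul_assoc]
    rw [Finset.sum_congr rfl h1, ← Finset.mul_sum, ← ih]
    simp only [pow_succ', Nat.add_sub_cancel, Nat.sub_self, pow_zero, one_mul]
    noncomm_ring

set_option maxHeartbeats 2000000 in
/-- Whitened matrix form of Lemma 3.3: FQI error bound under a geometric decay
assumption `‖Aᵏ‖ ≤ α·βᵏ` on the powers of the whitened cross-covariance `A`. -/
theorem stmt_1 (d : ℕ) (A Ahat : Matrix (Fin d) (Fin d) ℝ)
    (θ0 θ0hat : EuclideanSpace ℝ (Fin d)) (α β : ℝ)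
    (hα : 0 < α) (hβ0 : 0 < β) (hβ1 : β < 1)
    (hdecay : ∀ k : ℕ, ‖A ^ k‖ ≤ α * β ^ k)
    (hop : ‖Ahat - A‖ ≤ (1 - β) / (2 * α)) :
    Summable (fun k : ℕ => Matrix.toEuclideanLin (A ^ k) θ0) ∧
    ∀ T : ℕ,
      ‖(∑ k ∈ Finset.range (T + 1), Matrix.toEuclideanLin (Ahat ^ k) θ0hat) -
          ∑' k : ℕ, Matrix.toEuclideanLin (A ^ k) θ0‖ ≤
        (α / (1 - β)) * ‖θ0‖ * β ^ (T + 1) +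
          (2 * α / (1 - β)) * (‖θ0hat - θ0‖ + ‖Ahat - A‖ * ‖θ0‖ * α / (1 - β)) := by
  set ε : ℝ := ‖Ahat - A‖ with hε_def
  have hε0 : 0 ≤ ε := norm_nonneg _
  set γ : ℝ := β + α * ε with hγ_def
  have hαε : α * ε ≤ (1 - β) / 2 := by
    have := mul_le_mul_of_nonneg_left hop hα.le
    calc α * ε ≤ α * ((1 - β) / (2 * α)) := this
    _ = (1 - β) / 2 := by field_simp
  have hβγ : β ≤ γ := by simp [hγ_def]; positivity
  have hγ0 : 0 < γ := lt_of_lt_of_le hβ0 hβγ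
  have hγ1 : γ < 1 := by
    have : γ ≤ β + (1 - β) / 2 := by simp [hγ_def]; linarith
    linarith
  have h1γ : (1 - β) / 2 ≤ 1 - γ := by simp [hγ_def]; linarith
  have happ : ∀ (M : Matrix (Fin d) (Fin d) ℝ) (x : EuclideanSpace ℝ (Fin d)),
      ‖Matrix.toEuclideanLin M x‖ ≤ ‖M‖ * ‖x‖ := fun M x => M.l2_opNorm_mulVec x
  -- The key power bound by strong induction
  have hpow : ∀ k : ℕ, ‖Ahat ^ k‖ ≤ α * γ ^ k := by
    intro k
    induction k using Nat.strong_induction_on with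
    | _ k ih =>
      have hdiff : ‖Ahat ^ k - A ^ k‖ ≤ α * (γ ^ k - β ^ k) := by
        rw [norm_sub_rev]
        rw [aux_pow_sub_pow A Ahat k]
        calc ‖∑ i ∈ Finset.range k, A ^ (k - 1 - i) * (A - Ahat) * Ahat ^ i‖
            ≤ ∑ i ∈ Finset.range k, ‖A ^ (k - 1 - i) * (A - Ahat) * Ahat ^ i‖ :=
              norm_sum_le _ _
          _ ≤ ∑ i ∈ Finset.range k, (α * β ^ (k - 1 - i)) * ε * (α * γ ^ i) := by
              apply Finset.sum_le_sum
              intro i hi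
              rw [Finset.mem_range] at hi
              have hA : ‖A ^ (k - 1 - i)‖ ≤ α * β ^ (k - 1 - i) := hdecay _
              have hE : ‖A - Ahat‖ = ε := norm_sub_rev A Ahat
              have hH : ‖Ahat ^ i‖ ≤ α * γ ^ i := ih i hi
              calc ‖A ^ (k - 1 - i) * (A - Ahat) * Ahat ^ i‖
                  ≤ ‖A ^ (k - 1 - i) * (A - Ahat)‖ * ‖Ahat ^ i‖ := Matrix.l2_opNorm_mul _ _
                _ ≤ (‖A ^ (k - 1 - i)‖ * ‖A - Ahat‖) * ‖Ahat ^ i‖ := by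
                    apply mul_le_mul_of_nonneg_right (Matrix.l2_opNorm_mul _ _) (norm_nonneg _)
                _ ≤ (α * β ^ (k - 1 - i)) * ε * (α * γ ^ i) := by
                    apply mul_le_mul _ hH (norm_nonneg _) (mul_nonneg (by positivity) hε0)
                    exact mul_le_mul hA (le_of_eq hE) (norm_nonneg _) (by positivity)
          _ = α * (γ ^ k - β ^ k) := by
              have hid : (∑ i ∈ Finset.range k, γ ^ i * β ^ (k - 1 - i)) * (γ - β)
                  = γ ^ k - β ^ k := geom_sum₂_mul γ β k
              have hγβ : γ - β = α * ε := by simp [hγ_def]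
              calc ∑ i ∈ Finset.range k, (α * β ^ (k - 1 - i)) * ε * (α * γ ^ i)
                  = α * ((∑ i ∈ Finset.range k, γ ^ i * β ^ (k - 1 - i)) * (α * ε)) := by
                    rw [Finset.sum_mul, Finset.mul_sum]
                    apply Finset.sum_congr rfl
                    intro i _
                    ring
                _ = α * (γ ^ k - β ^ k) := by rw [← hγβ, hid]
      calc ‖Ahat ^ k‖ = ‖A ^ k + (Ahat ^ k - A ^ k)‖ := by congr 1; abel
        _ ≤ ‖A ^ k‖ + ‖Ahat ^ k - A ^ k‖ := norm_add_le _ _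
        _ ≤ α * β ^ k + α * (γ ^ k - β ^ k) := add_le_add (hdecay k) hdiff
        _ = α * γ ^ k := by ring
  have hdiff : ∀ k : ℕ, ‖Ahat ^ k - A ^ k‖ ≤ α * (γ ^ k - β ^ k) := by
    intro k
    have h := hpow k
    -- redo the diff bound (it was internal); easiest: repeat via same computation
    rw [norm_sub_rev, aux_pow_sub_pow A Ahat k]
    calc ‖∑ i ∈ Finset.range k, A ^ (k - 1 - i) * (A - Ahat) * Ahat ^ i‖
        ≤ ∑ i ∈ Finset.range k, ‖A ^ (k - 1 - i) * (A - Ahat) * Ahat ^ i‖ := norm_sum_le _ _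
      _ ≤ ∑ i ∈ Finset.range k, (α * β ^ (k - 1 - i)) * ε * (α * γ ^ i) := by
          apply Finset.sum_le_sum
          intro i hi
          have hA : ‖A ^ (k - 1 - i)‖ ≤ α * β ^ (k - 1 - i) := hdecay _
          have hE : ‖A - Ahat‖ = ε := norm_sub_rev A Ahat
          have hH : ‖Ahat ^ i‖ ≤ α * γ ^ i := hpow i
          calc ‖A ^ (k - 1 - i) * (A - Ahat) * Ahat ^ i‖
              ≤ ‖A ^ (k - 1 - i) * (A - Ahat)‖ * ‖Ahat ^ i‖ := Matrix.l2_opNorm_mul _ _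
            _ ≤ (‖A ^ (k - 1 - i)‖ * ‖A - Ahat‖) * ‖Ahat ^ i‖ := by
                apply mul_le_mul_of_nonneg_right (Matrix.l2_opNorm_mul _ _) (norm_nonneg _)
            _ ≤ (α * β ^ (k - 1 - i)) * ε * (α * γ ^ i) := by
                apply mul_le_mul _ hH (norm_nonneg _) (by positivity)
                exact mul_le_mul hA (le_of_eq hE) (norm_nonneg _) (by positivity)
      _ = α * (γ ^ k - β ^ k) := by
          have hid : (∑ i ∈ Finset.range k, γ ^ i * β ^ (k - 1 - i)) * (γ - β)
              = γ ^ k - β ^ k := geom_sum₂_mul γ β k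
          have hγβ : γ - β = α * ε := by simp [hγ_def]
          calc ∑ i ∈ Finset.range k, (α * β ^ (k - 1 - i)) * ε * (α * γ ^ i)
              = α * ((∑ i ∈ Finset.range k, γ ^ i * β ^ (k - 1 - i)) * (α * ε)) := by
                rw [Finset.sum_mul, Finset.mul_sum]
                apply Finset.sum_congr rfl
                intro i _
                ring
            _ = α * (γ ^ k - β ^ k) := by rw [← hγβ, hid]
  -- summability
  have hgeoβ : Summable (fun k : ℕ => β ^ k) := summable_geometric_of_lt_one hβ0.le hβ1
  have hbound : ∀ k : ℕ, ‖Matrix.toEuclideanLin (A ^ k) θ0‖ ≤ (α * ‖θ0‖) * β ^ k := by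
    intro k
    calc ‖Matrix.toEuclideanLin (A ^ k) θ0‖ ≤ ‖A ^ k‖ * ‖θ0‖ := happ _ _
      _ ≤ (α * β ^ k) * ‖θ0‖ := mul_le_mul_of_nonneg_right (hdecay k) (norm_nonneg _)
      _ = (α * ‖θ0‖) * β ^ k := by ring
  have hsum : Summable (fun k : ℕ => Matrix.toEuclideanLin (A ^ k) θ0) := by
    apply Summable.of_norm_bounded (hgeoβ.mul_left (α * ‖θ0‖)) hbound
  refine ⟨hsum, ?_⟩
  intro T
  set n : ℕ := T + 1 with hn_def
  set f : ℕ → EuclideanSpace ℝ (Fin d) := fun k => Matrix.toEuclideanLin (A ^ k) θ0 with hf_def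
  -- splitting
  have hsplit : ∀ k : ℕ, Matrix.toEuclideanLin (Ahat ^ k) θ0hat
      = Matrix.toEuclideanLin (Ahat ^ k) (θ0hat - θ0)
        + Matrix.toEuclideanLin (Ahat ^ k - A ^ k) θ0 + f k := by
    intro k
    simp only [hf_def, map_sub, LinearMap.sub_apply]
    abel
  have hdecomp : (∑ k ∈ Finset.range n, Matrix.toEuclideanLin (Ahat ^ k) θ0hat)
      - ∑' k : ℕ, f k
      = (∑ k ∈ Finset.range n, Matrix.toEuclideanLin (Ahat ^ k) (θ0hat - θ0))
        + (∑ k ∈ Finset.range n, Matrix.toEuclideanLin (Ahat ^ k - A ^ k) θ0)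
        + ((∑ k ∈ Finset.range n, f k) - ∑' k : ℕ, f k) := by
    rw [Finset.sum_congr rfl (fun k _ => hsplit k)]
    rw [Finset.sum_add_distrib, Finset.sum_add_distrib]
    abel
  -- geometric facts
  have hsumγ : ∑ k ∈ Finset.range n, γ ^ k ≤ 1 / (1 - γ) := by
    have h := geom_sum_eq (ne_of_lt hγ1) n
    have h1 : (γ ^ n - 1) / (γ - 1) = (1 - γ ^ n) / (1 - γ) := by
      rw [div_eq_div_iff (by linarith) (by linarith)]; ring
    rw [h, h1, div_le_div_iff₀ (by linarith) (by linarith)]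
    have hγn : (0:ℝ) ≤ γ ^ n := by positivity
    nlinarith
  have hsumdiff : ∑ k ∈ Finset.range n, (γ ^ k - β ^ k) ≤ (α * ε) / ((1 - γ) * (1 - β)) := by
    have hγs := geom_sum_eq (ne_of_lt hγ1) n
    have hβs := geom_sum_eq (ne_of_lt hβ1) n
    rw [Finset.sum_sub_distrib, hγs, hβs]
    have hβn : β ^ n ≤ γ ^ n := pow_le_pow_left₀ hβ0.le hβγ n
    have h1 : (γ ^ n - 1) / (γ - 1) = (1 - γ ^ n) / (1 - γ) := by
      rw [div_eq_div_iff (by linarith) (by linarith)]; ring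
    have h2 : (β ^ n - 1) / (β - 1) = (1 - β ^ n) / (1 - β) := by
      rw [div_eq_div_iff (by linarith) (by linarith)]; ring
    rw [h1, h2]
    have hγβ : γ - β = α * ε := by simp [hγ_def]
    rw [← hγβ]
    have key : β ^ n / (1 - β) ≤ γ ^ n / (1 - γ) :=
      div_le_div₀ (by positivity) hβn (by linarith) (by linarith)
    have hq : (1:ℝ) / (1 - γ) - 1 / (1 - β) = (γ - β) / ((1 - γ) * (1 - β)) := by
      rw [div_sub_div _ _ (by linarith : (1:ℝ) - γ ≠ 0) (by linarith : (1:ℝ) - β ≠ 0)]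
      congr 1
      ring
    have e1 : (1 - γ ^ n) / (1 - γ) = 1 / (1 - γ) - γ ^ n / (1 - γ) := by ring
    have e2 : (1 - β ^ n) / (1 - β) = 1 / (1 - β) - β ^ n / (1 - β) := by ring
    rw [e1, e2]
    linarith [key, hq.le, hq.ge]
  -- term 1
  have ht1 : ‖∑ k ∈ Finset.range n, Matrix.toEuclideanLin (Ahat ^ k) (θ0hat - θ0)‖
      ≤ (2 * α / (1 - β)) * ‖θ0hat - θ0‖ := by
    calc ‖∑ k ∈ Finset.range n, Matrix.toEuclideanLin (Ahat ^ k) (θ0hat - θ0)‖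
        ≤ ∑ k ∈ Finset.range n, ‖Matrix.toEuclideanLin (Ahat ^ k) (θ0hat - θ0)‖ :=
          norm_sum_le _ _
      _ ≤ ∑ k ∈ Finset.range n, (α * γ ^ k) * ‖θ0hat - θ0‖ := by
          apply Finset.sum_le_sum
          intro k _
          exact le_trans (happ _ _) (mul_le_mul_of_nonneg_right (hpow k) (norm_nonneg _))
      _ = (∑ k ∈ Finset.range n, γ ^ k) * (α * ‖θ0hat - θ0‖) := by
          rw [Finset.sum_mul]; apply Finset.sum_congr rfl; intro k _; ring
      _ ≤ (1 / (1 - γ)) * (α * ‖θ0hat - θ0‖) := by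
          apply mul_le_mul_of_nonneg_right hsumγ (by positivity)
      _ ≤ (2 / (1 - β)) * (α * ‖θ0hat - θ0‖) := by
          apply mul_le_mul_of_nonneg_right _ (by positivity)
          rw [div_le_div_iff₀ (by linarith) (by linarith)]
          linarith
      _ = (2 * α / (1 - β)) * ‖θ0hat - θ0‖ := by ring
  -- term 2
  have ht2 : ‖∑ k ∈ Finset.range n, Matrix.toEuclideanLin (Ahat ^ k - A ^ k) θ0‖
      ≤ (2 * α / (1 - β)) * (ε * ‖θ0‖ * α / (1 - β)) := by
    calc ‖∑ k ∈ Finset.range n, Matrix.toEuclideanLin (Ahat ^ k - A ^ k) θ0‖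
        ≤ ∑ k ∈ Finset.range n, ‖Matrix.toEuclideanLin (Ahat ^ k - A ^ k) θ0‖ :=
          norm_sum_le _ _
      _ ≤ ∑ k ∈ Finset.range n, (α * (γ ^ k - β ^ k)) * ‖θ0‖ := by
          apply Finset.sum_le_sum
          intro k _
          exact le_trans (happ _ _) (mul_le_mul_of_nonneg_right (hdiff k) (norm_nonneg _))
      _ = (∑ k ∈ Finset.range n, (γ ^ k - β ^ k)) * (α * ‖θ0‖) := by
          rw [Finset.sum_mul]; apply Finset.sum_congr rfl; intro k _; ring
      _ ≤ ((α * ε) / ((1 - γ) * (1 - β))) * (α * ‖θ0‖) := by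
          apply mul_le_mul_of_nonneg_right hsumdiff (by positivity)
      _ ≤ ((α * ε) * (2 / ((1 - β) * (1 - β)))) * (α * ‖θ0‖) := by
          apply mul_le_mul_of_nonneg_right _ (by positivity)
          have hcc : 1 / ((1 - γ) * (1 - β)) ≤ 2 / ((1 - β) * (1 - β)) := by
            rw [div_le_div_iff₀ (mul_pos (by linarith) (by linarith))
              (mul_pos (by linarith) (by linarith))]
            nlinarith
          calc (α * ε) / ((1 - γ) * (1 - β)) = (α * ε) * (1 / ((1 - γ) * (1 - β))) := by ring
            _ ≤ (α * ε) * (2 / ((1 - β) * (1 - β))) :=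
                mul_le_mul_of_nonneg_left hcc (mul_nonneg hα.le hε0)
      _ = (2 * α / (1 - β)) * (ε * ‖θ0‖ * α / (1 - β)) := by
          have hβne : (1:ℝ) - β ≠ 0 := by linarith
          field_simp
  -- term 3 (tail)
  have ht3 : ‖(∑ k ∈ Finset.range n, f k) - ∑' k : ℕ, f k‖
      ≤ (α / (1 - β)) * ‖θ0‖ * β ^ n := by
    have htail := hsum.sum_add_tsum_nat_add n
    have heq : (∑ k ∈ Finset.range n, f k) - ∑' k : ℕ, f k = -(∑' k : ℕ, f (k + n)) := by
      rw [← htail]; abel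
    rw [heq, norm_neg]
    have hsummable : Summable (fun k : ℕ => ‖f (k + n)‖) := by
      apply Summable.of_nonneg_of_le (fun k => norm_nonneg _)
        (fun k => hbound (k + n))
      exact ((hgeoβ.mul_left (α * ‖θ0‖)).comp_injective (add_left_injective n))
    calc ‖∑' k : ℕ, f (k + n)‖ ≤ ∑' k : ℕ, ‖f (k + n)‖ := norm_tsum_le_tsum_norm hsummable
      _ ≤ ∑' k : ℕ, (α * ‖θ0‖) * β ^ (k + n) := by
          apply Summable.tsum_le_tsum (fun k => hbound (k + n)) hsummable
          exact ((hgeoβ.mul_left (α * ‖θ0‖)).comp_injective (add_left_injective n))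
      _ = (α * ‖θ0‖) * β ^ n * (1 / (1 - β)) := by
          have : ∀ k : ℕ, (α * ‖θ0‖) * β ^ (k + n) = ((α * ‖θ0‖) * β ^ n) * β ^ k := by
            intro k; rw [pow_add]; ring
          rw [tsum_congr this, tsum_mul_left, tsum_geometric_of_lt_one hβ0.le hβ1]
          ring
      _ = (α / (1 - β)) * ‖θ0‖ * β ^ n := by ring
  -- combine
  rw [hdecomp]
  calc ‖(∑ k ∈ Finset.range n, Matrix.toEuclideanLin (Ahat ^ k) (θ0hat - θ0))
        + (∑ k ∈ Finset.range n, Matrix.toEuclideanLin (Ahat ^ k - A ^ k) θ0)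
        + ((∑ k ∈ Finset.range n, f k) - ∑' k : ℕ, f k)‖
      ≤ ‖∑ k ∈ Finset.range n, Matrix.toEuclideanLin (Ahat ^ k) (θ0hat - θ0)‖
        + ‖∑ k ∈ Finset.range n, Matrix.toEuclideanLin (Ahat ^ k - A ^ k) θ0‖
        + ‖(∑ k ∈ Finset.range n, f k) - ∑' k : ℕ, f k‖ := norm_add₃_le
    _ ≤ (2 * α / (1 - β)) * ‖θ0hat - θ0‖
        + (2 * α / (1 - β)) * (ε * ‖θ0‖ * α / (1 - β))
        + (α / (1 - β)) * ‖θ0‖ * β ^ n := add_le_add (add_le_add ht1 ht2) ht3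
    _ = (α / (1 - β)) * ‖θ0‖ * β ^ (T + 1)
        + (2 * α / (1 - β)) * (‖θ0hat - θ0‖ + ε * ‖θ0‖ * α / (1 - β)) := by
          rw [hn_def]; ring
end

section
/- Corollary 3.4 (low distribution shift implies stability). Let (Ω, ℙ) be a probability space and let x, y : Ω → ℝᵈ be measurable maps such that the matrix-valued functions ω ↦ x(ω)x(ω)ᵀ, ω ↦ x(ω)y(ω)ᵀ and ω ↦ y(ω)y(ω)ᵀ are Bochner integrable. Define Σ_cov := 𝔼[x xᵀ], Σ_cr := 𝔼[x yᵀ] and Σ_next := 𝔼[y yᵀ], and assume Σ_cov is positive definite. Let C ≥ 0 satisfy Σ_next ⪯ C·Σ_cov, and let γ ∈ (0,1). Then for every natural number j, ‖(γ·Σ_cov^{−1/2}·Σ_cr·Σ_cov^{−1/2})ʲ‖ ≤ (γ·√C)ʲ. -/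
open scoped Matrix.Norms.L2Operator
open Matrix MeasureTheory

/-- The square root of a positive semidefinite matrix, as defined in the older Mathlib
(`Matrix.PosSemidef.sqrt`, since removed). -/
noncomputable def Matrix.PosSemidef.sqrt {n 𝕜 : Type*} [Fintype n] [DecidableEq n] [RCLike 𝕜]
    [PartialOrder 𝕜]
    {A : Matrix n n 𝕜} (hA : A.PosSemidef) : Matrix n n 𝕜 :=
  (hA.1.eigenvectorUnitary : Matrix n n 𝕜) *
    diagonal (fun i => ((√(hA.1.eigenvalues i) : ℝ) : 𝕜)) *
    (star hA.1.eigenvectorUnitary : Matrix n n 𝕜)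

lemma sqrt_conjTranspose_aux {d : ℕ} {A : Matrix (Fin d) (Fin d) ℝ} (hA : A.PosSemidef) :
    (hA.sqrt)ᴴ = hA.sqrt := by
  simp [Matrix.PosSemidef.sqrt, conjTranspose_mul, Matrix.mul_assoc, diagonal_conjTranspose,
    star_eq_conjTranspose, conjTranspose_eq_transpose_of_trivial]

lemma sqrt_mul_self_aux {d : ℕ} {A : Matrix (Fin d) (Fin d) ℝ} (hA : A.PosSemidef) :
    hA.sqrt * hA.sqrt = A := by
  simp only [Matrix.PosSemidef.sqrt]
  set U := (hA.1.eigenvectorUnitary : Matrix (Fin d) (Fin d) ℝ) with hUdef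
  set D := diagonal (fun i => ((√(hA.1.eigenvalues i) : ℝ) : ℝ)) with hDdef
  have hU : star U * U = 1 := Unitary.coe_star_mul_self _
  have hD : D * D = diagonal (RCLike.ofReal ∘ hA.1.eigenvalues) := by
    rw [hDdef, diagonal_mul_diagonal]
    congr 1; funext i
    simp [Real.mul_self_sqrt (hA.eigenvalues_nonneg i)]
  calc U * D * star U * (U * D * star U) = U * D * (star U * U) * D * star U := by
        simp only [Matrix.mul_assoc]
    _ = U * (D * D) * star U := by rw [hU]; simp only [Matrix.mul_one, Matrix.mul_assoc]
    _ = A := by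
        rw [hD]
        conv_rhs => rw [hA.1.spectral_theorem]
        simp [Unitary.conjStarAlgAut_apply, hUdef]

section Aux

variable {d : ℕ}

/-- The bilinear functional `M ↦ u ⬝ᵥ M *ᵥ w` as a continuous linear map. -/
noncomputable def quadCLM (u w : Fin d → ℝ) : Matrix (Fin d) (Fin d) ℝ →L[ℝ] ℝ :=
  LinearMap.toContinuousLinearMap
    { toFun := fun M => u ⬝ᵥ (M *ᵥ w)
      map_add' := fun A B => by simp [Matrix.add_mulVec]
      map_smul' := fun c A => by
        simp [Matrix.smul_mulVec, dotProduct_smul, smul_eq_mul] }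

lemma quadCLM_apply (u w : Fin d → ℝ) (M : Matrix (Fin d) (Fin d) ℝ) :
    quadCLM u w M = u ⬝ᵥ (M *ᵥ w) := rfl

lemma quad_vecMulVec (u w a b : Fin d → ℝ) :
    u ⬝ᵥ ((vecMulVec a b) *ᵥ w) = (u ⬝ᵥ a) * (b ⬝ᵥ w) := by
  simp only [vecMulVec, mulVec, dotProduct, Matrix.of_apply, Finset.sum_mul, Finset.mul_sum]
  rw [Finset.sum_comm]
  apply Finset.sum_congr rfl
  intro j _
  apply Finset.sum_congr rfl
  intro i _
  ring

lemma dot_transpose (M : Matrix (Fin d) (Fin d) ℝ) (a b : Fin d → ℝ) :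
    a ⬝ᵥ (Mᵀ *ᵥ b) = b ⬝ᵥ (M *ᵥ a) := by
  simp only [mulVec, dotProduct, transpose_apply, Finset.mul_sum]
  rw [Finset.sum_comm]
  apply Finset.sum_congr rfl
  intro j _
  apply Finset.sum_congr rfl
  intro i _
  ring

lemma integral_quad {Ω : Type*} [MeasurableSpace Ω] (Pr : Measure Ω) (u w : Fin d → ℝ)
    {f : Ω → Matrix (Fin d) (Fin d) ℝ} (hf : Integrable f Pr) :
    u ⬝ᵥ ((∫ ω, f ω ∂Pr) *ᵥ w) = ∫ ω, u ⬝ᵥ (f ω *ᵥ w) ∂Pr := by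
  have h := (quadCLM u w).integral_comp_comm hf
  simpa [quadCLM_apply] using h.symm

end Aux

/-- Corollary 3.4: low distribution shift implies stability.  Here `x` and `y`
are the current and next whitened state-action features, `Scov`, `Scr`,
`Snext` are the covariance, cross-covariance and next-state covariance, and
`C` is the distribution-shift coefficient. -/
theorem stmt_3 {Ω : Type*} [MeasurableSpace Ω] (Pr : Measure Ω) [IsProbabilityMeasure Pr]
    (d : ℕ) (x y : Ω → Fin d → ℝ) (hx : Measurable x) (hy : Measurable y)
    (hxx : Integrable (fun ω => vecMulVec (x ω) (x ω)) Pr)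
    (hxy : Integrable (fun ω => vecMulVec (x ω) (y ω)) Pr)
    (hyy : Integrable (fun ω => vecMulVec (y ω) (y ω)) Pr)
    (Scov Scr Snext : Matrix (Fin d) (Fin d) ℝ)
    (hScov : Scov = ∫ ω, vecMulVec (x ω) (x ω) ∂Pr)
    (hScr : Scr = ∫ ω, vecMulVec (x ω) (y ω) ∂Pr)
    (hSnext : Snext = ∫ ω, vecMulVec (y ω) (y ω) ∂Pr)
    (hcov : Scov.PosDef)
    (C : ℝ) (hC : 0 ≤ C) (hshift : (C • Scov - Snext).PosSemidef)
    (γ : ℝ) (hγ0 : 0 < γ) (hγ1 : γ < 1) :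
    ∀ j : ℕ,
      ‖(γ • (hcov.posSemidef.sqrt⁻¹ * Scr * hcov.posSemidef.sqrt⁻¹)) ^ j‖ ≤
        (γ * Real.sqrt C) ^ j := by
  classical
  haveI : Invertible Scov := hcov.isUnit.invertible
  -- quadratic form descriptions of the three matrices
  have hScov_q : ∀ u w : Fin d → ℝ,
      u ⬝ᵥ (Scov *ᵥ w) = ∫ ω, (u ⬝ᵥ x ω) * (x ω ⬝ᵥ w) ∂Pr := by
    intro u w
    rw [hScov, integral_quad Pr u w hxx]
    simp only [quad_vecMulVec]
  have hScr_q : ∀ u w : Fin d → ℝ,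
      u ⬝ᵥ (Scr *ᵥ w) = ∫ ω, (u ⬝ᵥ x ω) * (y ω ⬝ᵥ w) ∂Pr := by
    intro u w
    rw [hScr, integral_quad Pr u w hxy]
    simp only [quad_vecMulVec]
  have hSnext_q : ∀ u w : Fin d → ℝ,
      u ⬝ᵥ (Snext *ᵥ w) = ∫ ω, (u ⬝ᵥ y ω) * (y ω ⬝ᵥ w) ∂Pr := by
    intro u w
    rw [hSnext, integral_quad Pr u w hyy]
    simp only [quad_vecMulVec]
  -- integrability of the scalar quadratic forms
  have hint : ∀ (u w : Fin d → ℝ) (f g : Ω → Fin d → ℝ),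
      Integrable (fun ω => vecMulVec (f ω) (g ω)) Pr →
      Integrable (fun ω => (u ⬝ᵥ f ω) * (g ω ⬝ᵥ w)) Pr := by
    intro u w f g hf
    have := (quadCLM u w).integrable_comp hf
    simpa [quadCLM_apply, quad_vecMulVec] using this
  -- symmetry of Snext
  have hSnext_herm : Snext.IsHermitian := by
    ext i j
    have h1 := hSnext_q (Pi.single i 1) (Pi.single j 1)
    have h2 := hSnext_q (Pi.single j 1) (Pi.single i 1)
    simp only [conjTranspose_apply, star_trivial]
    have e1 : ∀ (k l : Fin d) (M : Matrix (Fin d) (Fin d) ℝ),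
        (Pi.single k 1 : Fin d → ℝ) ⬝ᵥ (M *ᵥ Pi.single l 1) = M k l := by
      intro k l M
      simp [Matrix.mulVec_single, single_dotProduct]
    rw [e1] at h1 h2
    rw [h1, h2]
    congr 1
    funext ω
    simp only [single_dotProduct, dotProduct_single, one_mul, mul_one]
    ring
  -- the block second-moment matrix is PSD
  have hP : (fromBlocks Scov Scr Scrᴴ Snext).PosSemidef := by
    refine PosSemidef.of_dotProduct_mulVec_nonneg ?_ ?_
    · have hth : Scovᴴ = Scov := hcov.1
      show (fromBlocks Scov Scr Scrᴴ Snext)ᴴ = _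
      rw [fromBlocks_conjTranspose, conjTranspose_conjTranspose, hth, hSnext_herm.eq]
    · intro v
      set u : Fin d → ℝ := v ∘ Sum.inl with hu
      set w : Fin d → ℝ := v ∘ Sum.inr with hw
      have expand : star v ⬝ᵥ (fromBlocks Scov Scr Scrᴴ Snext *ᵥ v) =
          u ⬝ᵥ (Scov *ᵥ u) + u ⬝ᵥ (Scr *ᵥ w) + (w ⬝ᵥ (Scrᴴ *ᵥ u) + w ⬝ᵥ (Snext *ᵥ w)) := by
        rw [fromBlocks_mulVec, star_trivial, dotProduct_block]
        simp [dotProduct_add, hu, hw]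
      rw [expand]
      have hcross : w ⬝ᵥ (Scrᴴ *ᵥ u) = u ⬝ᵥ (Scr *ᵥ w) := by
        have : Scrᴴ = Scrᵀ := by
          ext i j; simp [conjTranspose_apply]
        rw [this, dot_transpose]
      rw [hcross, hScov_q, hScr_q, hSnext_q]
      have i1 := hint u u x x hxx
      have i2 := hint u w x y hxy
      have i3 := hint w w y y hyy
      have hnn : (0:ℝ) ≤ ∫ ω, ((u ⬝ᵥ x ω) * (x ω ⬝ᵥ u) + (u ⬝ᵥ x ω) * (y ω ⬝ᵥ w)) +
          ((u ⬝ᵥ x ω) * (y ω ⬝ᵥ w) + (w ⬝ᵥ y ω) * (y ω ⬝ᵥ w)) ∂Pr := by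
        apply integral_nonneg
        intro ω
        have c1 : x ω ⬝ᵥ u = u ⬝ᵥ x ω := dotProduct_comm _ _
        have c2 : y ω ⬝ᵥ w = w ⬝ᵥ y ω := dotProduct_comm _ _
        simp only [Pi.zero_apply]
        rw [c1, c2]
        nlinarith [sq_nonneg (u ⬝ᵥ x ω + w ⬝ᵥ y ω)]
      have e3 : ∫ ω, ((u ⬝ᵥ x ω) * (x ω ⬝ᵥ u) + (u ⬝ᵥ x ω) * (y ω ⬝ᵥ w)) +
            ((u ⬝ᵥ x ω) * (y ω ⬝ᵥ w) + (w ⬝ᵥ y ω) * (y ω ⬝ᵥ w)) ∂Pr =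
          (∫ ω, (u ⬝ᵥ x ω) * (x ω ⬝ᵥ u) + (u ⬝ᵥ x ω) * (y ω ⬝ᵥ w) ∂Pr) +
          (∫ ω, (u ⬝ᵥ x ω) * (y ω ⬝ᵥ w) + (w ⬝ᵥ y ω) * (y ω ⬝ᵥ w) ∂Pr) :=
        integral_add (i1.add i2) (i2.add i3)
      rwa [e3, integral_add i1 i2, integral_add i2 i3] at hnn
  -- Schur complement
  have hSchur : (Snext - Scrᴴ * Scov⁻¹ * Scr).PosSemidef :=
    (PosDef.fromBlocks₁₁ Scr Snext hcov).mp hP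
  have hsum : (C • Scov - Scrᴴ * Scov⁻¹ * Scr).PosSemidef := by
    have h := hshift.add hSchur
    rwa [sub_add_sub_cancel] at h
  -- the whitening matrix
  set S := hcov.posSemidef.sqrt with hSdef
  have hSh : Sᴴ = S := sqrt_conjTranspose_aux hcov.posSemidef
  have hSS : S * S = Scov := sqrt_mul_self_aux hcov.posSemidef
  have hSdet : IsUnit S.det := by
    have h : IsUnit (S.det * S.det) := by
      rw [← det_mul, hSS]; exact hcov.det_pos.ne'.isUnit
    exact isUnit_of_mul_isUnit_left h
  set T := S⁻¹ with hTdef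
  have hTh : Tᴴ = T := by rw [hTdef, conjTranspose_nonsing_inv, hSh]
  have hTS : T * S = 1 := nonsing_inv_mul S hSdet
  have hST : S * T = 1 := mul_nonsing_inv S hSdet
  set M := T * Scr * T with hMdef
  -- conjugated PSD inequality
  have hconj : (T * (C • Scov - Scrᴴ * Scov⁻¹ * Scr) * T).PosSemidef := by
    have h := hsum.conjTranspose_mul_mul_same T
    rwa [hTh] at h
  have hkey : (C • (1 : Matrix (Fin d) (Fin d) ℝ) - Mᴴ * M).PosSemidef := by
    have e1 : T * (C • Scov) * T = C • (1 : Matrix (Fin d) (Fin d) ℝ) := by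
      rw [Matrix.mul_smul, Matrix.smul_mul]
      congr 1
      rw [← hSS, ← Matrix.mul_assoc, hTS, Matrix.one_mul, hST]
    have e2 : T * (Scrᴴ * Scov⁻¹ * Scr) * T = Mᴴ * M := by
      have hinv : Scov⁻¹ = T * T := by
        rw [← hSS, Matrix.mul_inv_rev]
      rw [hinv, hMdef]
      rw [conjTranspose_mul, conjTranspose_mul, hTh]
      simp only [Matrix.mul_assoc]
    have e : T * (C • Scov - Scrᴴ * Scov⁻¹ * Scr) * T =
        C • (1 : Matrix (Fin d) (Fin d) ℝ) - Mᴴ * M := by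
      rw [Matrix.mul_sub, Matrix.sub_mul, e1, e2]
    rwa [e] at hconj
  -- operator norm bound on M
  have hnorm : ‖M‖ ≤ Real.sqrt C := by
    have hb : ∀ w' : Fin d → ℝ, (M *ᵥ w') ⬝ᵥ (M *ᵥ w') ≤ C * (w' ⬝ᵥ w') := by
      intro w'
      have h0 := hkey.dotProduct_mulVec_nonneg w'
      rw [star_trivial, Matrix.sub_mulVec, dotProduct_sub, sub_nonneg] at h0
      have hMM : w' ⬝ᵥ ((Mᴴ * M) *ᵥ w') = (M *ᵥ w') ⬝ᵥ (M *ᵥ w') := by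
        rw [← Matrix.mulVec_mulVec]
        have hMt : Mᴴ = Mᵀ := by ext i j; simp [conjTranspose_apply]
        rw [hMt, dot_transpose]
      rw [hMM] at h0
      calc (M *ᵥ w') ⬝ᵥ (M *ᵥ w') ≤ w' ⬝ᵥ ((C • (1 : Matrix (Fin d) (Fin d) ℝ)) *ᵥ w') := h0
        _ = C * (w' ⬝ᵥ w') := by
            rw [Matrix.smul_mulVec, Matrix.one_mulVec, dotProduct_smul, smul_eq_mul]
    rw [Matrix.l2_opNorm_def]
    refine ContinuousLinearMap.opNorm_le_bound _ (Real.sqrt_nonneg C) fun v => ?_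
    have key : ‖(WithLp.equiv 2 (Fin d → ℝ)).symm
        (M *ᵥ (WithLp.equiv 2 (Fin d → ℝ) v))‖ ≤ Real.sqrt C * ‖v‖ := by
      set w' : Fin d → ℝ := WithLp.equiv 2 (Fin d → ℝ) v with hw'
      have h1 : ‖(WithLp.equiv 2 (Fin d → ℝ)).symm (M *ᵥ w')‖ ^ 2 = (M *ᵥ w') ⬝ᵥ (M *ᵥ w') := by
        rw [← real_inner_self_eq_norm_sq, EuclideanSpace.inner_eq_star_dotProduct]
        simp
      have h2 : ‖v‖ ^ 2 = w' ⬝ᵥ w' := by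
        rw [← real_inner_self_eq_norm_sq, EuclideanSpace.inner_eq_star_dotProduct]
        simp [hw']
      have h3 : ‖(WithLp.equiv 2 (Fin d → ℝ)).symm (M *ᵥ w')‖ ^ 2 ≤ (Real.sqrt C * ‖v‖) ^ 2 := by
        rw [h1, mul_pow, Real.sq_sqrt hC, h2]
        exact hb w'
      have h4 := Real.sqrt_le_sqrt h3
      rwa [Real.sqrt_sq (norm_nonneg _), Real.sqrt_sq (by positivity)] at h4
    exact key
  -- conclusion
  intro j
  cases j with
  | zero =>
      simp only [pow_zero]
      rw [Matrix.cstar_norm_def, _root_.map_one, ContinuousLinearMap.one_def]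
      exact ContinuousLinearMap.norm_id_le
  | succ n =>
      calc ‖(γ • M) ^ (n + 1)‖ ≤ ‖γ • M‖ ^ (n + 1) := norm_pow_le' _ (Nat.succ_pos n)
        _ ≤ (γ * Real.sqrt C) ^ (n + 1) := by
            apply pow_le_pow_left₀ (norm_nonneg _) (n := n + 1)
            rw [norm_smul, Real.norm_eq_abs, abs_of_pos hγ0]
            exact mul_le_mul_of_nonneg_left hnorm hγ0.le
end

section
/- Lemma A.3 (completeness makes the projected backup a nonexpansion in the sup norm). Let 𝒮 be a nonempty finite type, let Φ be a real matrix with rows (φ_i)_{i∈𝒮} in ℝᵈ, let μ : 𝒮 → ℝ be nonnegative with ∑_{i∈𝒮} μ_i = 1, and let P be a row-stochastic 𝒮×𝒮 real matrix (all entries nonnegative, each row summing to 1). Define Σ_cov := Φᵀ·diag(μ)·Φ and Σ_cr := Φᵀ·diag(μ)·P·Φ, and assume Σ_cov is positive definite. Assume that for every θ ∈ ℝᵈ there exists θ′ ∈ ℝᵈ with Φθ′ = PΦθ. Then for every θ ∈ ℝᵈ one has Φ·Σ_cov⁻¹·Σ_cr·θ = P·Φ·θ, and consequently max_{i∈𝒮}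 |(Φ·Σ_cov⁻¹·Σ_cr·θ)_i| ≤ max_{i∈𝒮} |(Φθ)_i|. -/
open scoped Matrix.Norms.L2Operator
open Matrix

/-- Lemma A.3: under Bellman completeness the projected backup
`Φ·Σ_cov⁻¹·Σ_cr` coincides with `P·Φ` and is hence a nonexpansion in the sup
norm. -/
theorem stmt_6 {S : Type*} [Fintype S] [DecidableEq S] [Nonempty S]
    (d : ℕ)
    (Φ : Matrix S (Fin d) ℝ) (μ : S → ℝ)
    (hμ0 : ∀ i, 0 ≤ μ i) (hμ1 : ∑ i, μ i = 1)
    (P : Matrix S S ℝ) (hP0 : ∀ i j, 0 ≤ P i j) (hP1 : ∀ i, ∑ j, P i j = 1)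
    (Scov Scr : Matrix (Fin d) (Fin d) ℝ)
    (hScov : Scov = Φᵀ * Matrix.diagonal μ * Φ)
    (hScr : Scr = Φᵀ * Matrix.diagonal μ * P * Φ)
    (hcov : Scov.PosDef)
    (hcomplete : ∀ θ : Fin d → ℝ, ∃ θ' : Fin d → ℝ, Φ *ᵥ θ' = P *ᵥ (Φ *ᵥ θ)) :
    ∀ θ : Fin d → ℝ,
      (Φ * Scov⁻¹ * Scr) *ᵥ θ = (P * Φ) *ᵥ θ ∧
      (⨆ i : S, |((Φ * Scov⁻¹ * Scr) *ᵥ θ) i|) ≤ ⨆ i : S, |(Φ *ᵥ θ) i| := by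
  intro θ
  obtain ⟨θ', hθ'⟩ := hcomplete θ
  have hinv : Scov⁻¹ * Scov = 1 :=
    Matrix.nonsing_inv_mul _ hcov.det_pos.ne'.isUnit
  have hmva : ∀ (A : Matrix S (Fin d) ℝ) (B C : Matrix (Fin d) (Fin d) ℝ) (v),
      (A * B * C) *ᵥ v = A *ᵥ (B *ᵥ (C *ᵥ v)) := by
    intro A B C v
    rw [Matrix.mulVec_mulVec, Matrix.mulVec_mulVec]
  have hScr_v : Scr *ᵥ θ = Scov *ᵥ θ' := by
    rw [hScr, hScov]
    calc (Φᵀ * Matrix.diagonal μ * P * Φ) *ᵥ θ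
        = (Φᵀ * Matrix.diagonal μ) *ᵥ (P *ᵥ (Φ *ᵥ θ)) := by
          rw [Matrix.mulVec_mulVec, Matrix.mulVec_mulVec, Matrix.mul_assoc,
            Matrix.mul_assoc]
      _ = (Φᵀ * Matrix.diagonal μ) *ᵥ (Φ *ᵥ θ') := by rw [hθ']
      _ = (Φᵀ * Matrix.diagonal μ * Φ) *ᵥ θ' := by rw [Matrix.mulVec_mulVec]
  have heq : (Φ * Scov⁻¹ * Scr) *ᵥ θ = (P * Φ) *ᵥ θ := by
    have h2 : Scov⁻¹ *ᵥ (Scov *ᵥ θ') = θ' := by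
      rw [Matrix.mulVec_mulVec, hinv, Matrix.one_mulVec]
    rw [hmva, hScr_v, h2, hθ', ← Matrix.mulVec_mulVec]
  refine ⟨heq, ?_⟩
  rw [heq]
  have hbdd : BddAbove (Set.range fun j => |(Φ *ᵥ θ) j|) :=
    Set.Finite.bddAbove (Set.finite_range _)
  refine ciSup_le fun i => ?_
  have : ((P * Φ) *ᵥ θ) i = ∑ j, P i j * (Φ *ᵥ θ) j := by
    rw [← Matrix.mulVec_mulVec]
    simp [Matrix.mulVec, dotProduct]
  rw [this]
  calc |∑ j, P i j * (Φ *ᵥ θ) j| ≤ ∑ j, |P i j * (Φ *ᵥ θ) j| :=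
        Finset.abs_sum_le_sum_abs _ _
    _ = ∑ j, P i j * |(Φ *ᵥ θ) j| := by
        refine Finset.sum_congr rfl fun j _ => ?_
        rw [abs_mul, abs_of_nonneg (hP0 i j)]
    _ ≤ ∑ j, P i j * (⨆ k : S, |(Φ *ᵥ θ) k|) := by
        refine Finset.sum_le_sum fun j _ => ?_
        exact mul_le_mul_of_nonneg_left (le_ciSup hbdd j) (hP0 i j)
    _ = ⨆ k : S, |(Φ *ᵥ θ) k| := by rw [← Finset.sum_mul, hP1, one_mul]
end

section
/- Core of Proposition 3.5 (exponential variance blow-up of fitted Q-iteration without stability). Let (Ω, ℙ) be a probability space and let z : Ω → ℝᵈ be measurable with each coordinate z_i and each product z_i·z_j integrable, with 𝔼[z] = 0. Let Λ be the d×d covariance matrix with entries Λ_{ij} = 𝔼[z_i z_j], and suppose σ > 0 satisfies σ·I ⪯ Λ. Let A be a d×d real matrix whose complexification (the ℂ-linear map induced by A on ℂᵈ) has an eigenvalue λ ∈ ℂ with |λ| > 1. Then for every natural number T, 𝔼[ ‖(∑_{k=0}^T Aᵏ)·z‖² ] ≥ σ·|(λ^{T+1} − 1)/(λ − 1)|².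 -/
open scoped Matrix.Norms.L2Operator
open Matrix MeasureTheory Finset
set_option maxHeartbeats 1000000

/-- Core of Proposition 3.5: if the backup matrix `A` has a complex eigenvalue
`lam` of modulus greater than 1 and the noise `z` is centered with covariance
`Λ ⪰ σ·I`, then the variance of the `T`-step FQI iterate grows like
`|(lam^{T+1} − 1)/(lam − 1)|²`. -/
theorem stmt_8 {Ω : Type*} [MeasurableSpace Ω] (Pr : Measure Ω) [IsProbabilityMeasure Pr]
    (d : ℕ) (z : Ω → Fin d → ℝ) (hz : Measurable z)
    (hint : ∀ i, Integrable (fun ω => z ω i) Pr)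
    (hint2 : ∀ i j, Integrable (fun ω => z ω i * z ω j) Pr)
    (hmean : ∀ i, ∫ ω, z ω i ∂Pr = 0)
    (Λ : Matrix (Fin d) (Fin d) ℝ) (hΛ : Λ = Matrix.of fun i j => ∫ ω, z ω i * z ω j ∂Pr)
    (σ : ℝ) (hσ : 0 < σ)
    (hΛlb : (Λ - σ • (1 : Matrix (Fin d) (Fin d) ℝ)).PosSemidef)
    (A : Matrix (Fin d) (Fin d) ℝ) (lam : ℂ) (hlam : 1 < ‖lam‖)
    (hev : ∃ v : Fin d → ℂ, v ≠ 0 ∧ A.map Complex.ofReal *ᵥ v = lam • v) :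
    ∀ T : ℕ,
      σ * ‖(lam ^ (T + 1) - 1) / (lam - 1)‖ ^ 2 ≤
        ∫ ω, ‖(WithLp.equiv 2 (Fin d → ℝ)).symm
          ((∑ k ∈ Finset.range (T + 1), A ^ k) *ᵥ z ω)‖ ^ 2 ∂Pr := by
  intro T
  obtain ⟨v, hv0, hevv⟩ := hev
  set B : Matrix (Fin d) (Fin d) ℝ := ∑ k ∈ Finset.range (T + 1), A ^ k with hBdef
  set μ : ℂ := (lam ^ (T + 1) - 1) / (lam - 1) with hμdef
  have hlam1 : lam ≠ 1 := by
    intro h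
    rw [h] at hlam
    simp at hlam
  set M : Matrix (Fin d) (Fin d) ℂ := A.map Complex.ofReal with hMdef
  have hpow : ∀ k : ℕ, (M ^ k) *ᵥ v = lam ^ k • v := by
    intro k
    induction k with
    | zero => simp
    | succ k ih =>
      rw [pow_succ, ← Matrix.mulVec_mulVec, hevv, Matrix.mulVec_smul, ih, smul_smul,
        ← pow_succ']
  -- eigenvalue relation for B
  have hBev : B.map Complex.ofReal *ᵥ v = μ • v := by
    have h1 : B.map Complex.ofReal = ∑ k ∈ Finset.range (T + 1), M ^ k := by
      rw [hBdef]
      have : (∑ k ∈ Finset.range (T + 1), A ^ k).map Complex.ofReal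
          = Complex.ofRealHom.mapMatrix (∑ k ∈ Finset.range (T + 1), A ^ k) := rfl
      rw [this, map_sum]
      refine Finset.sum_congr rfl fun k _ => ?_
      exact map_pow (Complex.ofRealHom.mapMatrix) A k
    have h2 : (∑ k ∈ Finset.range (T + 1), M ^ k) *ᵥ v
        = ∑ k ∈ Finset.range (T + 1), (M ^ k) *ᵥ v := by
      ext j
      simp only [Matrix.mulVec, dotProduct, Finset.sum_apply, Matrix.sum_apply,
        Finset.sum_mul]
      exact Finset.sum_comm
    rw [h1, h2]
    have h3 : ∑ k ∈ Finset.range (T + 1), (M ^ k) *ᵥ v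
        = (∑ k ∈ Finset.range (T + 1), lam ^ k) • v := by
      rw [Finset.sum_smul]
      exact Finset.sum_congr rfl fun k _ => hpow k
    rw [h3, geom_sum_eq hlam1]
  set S : ℝ := ∑ j, ‖v j‖ ^ 2 with hSdef
  set F : ℝ := ∑ i, ∑ j, (B i j) ^ 2 with hFdef
  have hS : 0 < S := by
    obtain ⟨j, hj⟩ := Function.ne_iff.mp hv0
    refine Finset.sum_pos' (fun j _ => by positivity) ⟨j, Finset.mem_univ j, ?_⟩
    have : 0 < ‖v j‖ := by simpa using hj
    positivity
  have hrow : ∀ i, ‖μ * v i‖ ^ 2 ≤ (∑ j, (B i j) ^ 2) * S := by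
    intro i
    have h1 : μ * v i = ∑ j, (B i j : ℂ) * v j := by
      have h := congrFun hBev i
      simp only [Matrix.mulVec, dotProduct, Matrix.map_apply, Pi.smul_apply,
        smul_eq_mul] at h
      rw [← h]
    calc ‖μ * v i‖ ^ 2 = ‖∑ j, (B i j : ℂ) * v j‖ ^ 2 := by rw [h1]
      _ ≤ (∑ j, ‖(B i j : ℂ) * v j‖) ^ 2 := by
          have h2 : ‖∑ j, (B i j : ℂ) * v j‖
              ≤ ∑ j, ‖(B i j : ℂ) * v j‖ := by
            exact norm_sum_le Finset.univ (fun j => (B i j : ℂ) * v j)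
          exact pow_le_pow_left₀ (norm_nonneg _) h2 2
      _ = (∑ j, |B i j| * ‖v j‖) ^ 2 := by
          simp [Complex.norm_real, Real.norm_eq_abs]
      _ ≤ (∑ j, |B i j| ^ 2) * (∑ j, ‖v j‖ ^ 2) :=
          Finset.sum_mul_sq_le_sq_mul_sq _ _ _
      _ = (∑ j, (B i j) ^ 2) * S := by simp [sq_abs, hSdef]
  have hmuF : ‖μ‖ ^ 2 ≤ F := by
    have hmul : ‖μ‖ ^ 2 * S ≤ F * S := by
      calc ‖μ‖ ^ 2 * S = ∑ i, ‖μ * v i‖ ^ 2 := by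
            rw [hSdef, Finset.mul_sum]
            exact Finset.sum_congr rfl fun i _ => by rw [norm_mul, mul_pow]
        _ ≤ ∑ i, (∑ j, (B i j) ^ 2) * S := Finset.sum_le_sum fun i _ => hrow i
        _ = F * S := by rw [hFdef, Finset.sum_mul]
    exact le_of_mul_le_mul_right hmul hS
  -- compute the integral
  have hnorm : ∀ ω, ‖(WithLp.equiv 2 (Fin d → ℝ)).symm (B *ᵥ z ω)‖ ^ 2
      = ∑ i, ∑ j, ∑ k, B i j * B i k * (z ω j * z ω k) := by
    intro ω
    rw [EuclideanSpace.norm_eq, Real.sq_sqrt (by positivity)]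
    refine Finset.sum_congr rfl fun i _ => ?_
    have h1 : ‖(WithLp.equiv 2 (Fin d → ℝ)).symm (B *ᵥ z ω) i‖ ^ 2
        = (∑ j, B i j * z ω j) ^ 2 := by
      simp [WithLp.equiv_symm_apply, PiLp.toLp_apply, Matrix.mulVec, dotProduct, sq_abs,
        Real.norm_eq_abs]
    rw [h1, sq, Finset.sum_mul_sum]
    refine Finset.sum_congr rfl fun j _ => Finset.sum_congr rfl fun k _ => by ring
  have hintegral : ∫ ω, ‖(WithLp.equiv 2 (Fin d → ℝ)).symm (B *ᵥ z ω)‖ ^ 2 ∂Pr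
      = ∑ i, ∑ j, ∑ k, B i j * B i k * Λ j k := by
    rw [MeasureTheory.integral_congr_ae (Filter.Eventually.of_forall hnorm)]
    rw [MeasureTheory.integral_finset_sum _ (fun i _ => by
      exact integrable_finset_sum _ (fun j _ => integrable_finset_sum _
        (fun k _ => (hint2 j k).const_mul _)))]
    refine Finset.sum_congr rfl fun i _ => ?_
    rw [MeasureTheory.integral_finset_sum _ (fun j _ => integrable_finset_sum _
      (fun k _ => (hint2 j k).const_mul _))]
    refine Finset.sum_congr rfl fun j _ => ?_
    rw [MeasureTheory.integral_finset_sum _ (fun k _ => (hint2 j k).const_mul _)]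
    refine Finset.sum_congr rfl fun k _ => ?_
    rw [MeasureTheory.integral_const_mul, hΛ]
    rfl
  -- lower bound via positive semidefiniteness
  have hquad : ∀ i, σ * ∑ j, (B i j) ^ 2 ≤ ∑ j, ∑ k, B i j * B i k * Λ j k := by
    intro i
    have h := hΛlb.dotProduct_mulVec_nonneg (fun j => B i j)
    simp only [star_trivial] at h
    have hdot : (fun j => B i j) ⬝ᵥ ((Λ - σ • (1 : Matrix (Fin d) (Fin d) ℝ)) *ᵥ fun j => B i j)
        = (∑ j, ∑ k, B i j * B i k * Λ j k) - σ * ∑ j, (B i j) ^ 2 := by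
      rw [Matrix.sub_mulVec, dotProduct_sub]
      congr 1
      · simp only [dotProduct, Matrix.mulVec, Finset.mul_sum]
        refine Finset.sum_congr rfl fun j _ => ?_
        refine Finset.sum_congr rfl fun k _ => by ring
      · rw [Matrix.smul_mulVec, Matrix.one_mulVec, dotProduct_smul,
          smul_eq_mul]
        simp only [dotProduct]
        rw [Finset.mul_sum, Finset.mul_sum]
        refine Finset.sum_congr rfl fun j _ => by ring
    have h0 : 0 ≤ (fun j => B i j) ⬝ᵥ
        ((Λ - σ • (1 : Matrix (Fin d) (Fin d) ℝ)) *ᵥ fun j => B i j) := by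
      simpa using h
    rw [hdot] at h0
    linarith
  rw [hintegral]
  calc σ * ‖μ‖ ^ 2 ≤ σ * F := by
        exact mul_le_mul_of_nonneg_left hmuF hσ.le
    _ = ∑ i, σ * ∑ j, (B i j) ^ 2 := by rw [hFdef, Finset.mul_sum]
    _ ≤ ∑ i, ∑ j, ∑ k, B i j * B i k * Λ j k := Finset.sum_le_sum fun i _ => hquad i
end

section
/- Proposition 4.2 (stability implies invertibility, with a quantitative bound). Let A be a d×d real matrix and let P be a symmetric positive semidefinite d×d real matrix solving the discrete Lyapunov equation P = AᵀPA + I. Then I − A is invertible and ‖(I − A)⁻¹‖ ≤ 2·cond(P)^{1/2}·‖P‖, where cond(P) := ‖P‖·‖P⁻¹‖ (P is invertible since P ⪰ I). -/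
open scoped Matrix.Norms.L2Operator InnerProductSpace
open Matrix

private lemma stmt11_key (d : ℕ) (A P : Matrix (Fin d) (Fin d) ℝ)
    (hP : P.PosSemidef) (hlyap : P = Aᵀ * P * A + 1)
    (x y : Fin d → ℝ) (hxy : A *ᵥ x = x - y) :
    x ⬝ᵥ x = 2 * (x ⬝ᵥ (P *ᵥ y)) - y ⬝ᵥ (P *ᵥ y) := by
  have hPsym : Pᵀ = P := by
    have := hP.1
    rwa [Matrix.IsHermitian, conjTranspose_eq_transpose_of_trivial] at this
  have hPx : x ⬝ᵥ (P *ᵥ x) = (A *ᵥ x) ⬝ᵥ (P *ᵥ (A *ᵥ x)) + x ⬝ᵥ x := by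
    conv_lhs => rw [hlyap]
    rw [Matrix.add_mulVec, dotProduct_add, Matrix.one_mulVec]
    congr 1
    rw [← Matrix.mulVec_mulVec, ← Matrix.mulVec_mulVec,
      Matrix.dotProduct_mulVec x Aᵀ, Matrix.vecMul_transpose]
  rw [hxy] at hPx
  have hyx : y ⬝ᵥ (P *ᵥ x) = x ⬝ᵥ (P *ᵥ y) := by
    rw [Matrix.dotProduct_mulVec y P, ← Matrix.mulVec_transpose, hPsym,
      dotProduct_comm]
  have hexp : (x - y) ⬝ᵥ (P *ᵥ (x - y))
      = x ⬝ᵥ (P *ᵥ x) - 2 * (x ⬝ᵥ (P *ᵥ y)) + y ⬝ᵥ (P *ᵥ y) := by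
    rw [Matrix.mulVec_sub, sub_dotProduct, dotProduct_sub,
      dotProduct_sub, hyx]
    ring
  rw [hexp] at hPx
  linarith

private lemma stmt11_bound (d : ℕ) (A P : Matrix (Fin d) (Fin d) ℝ)
    (hP : P.PosSemidef) (hlyap : P = Aᵀ * P * A + 1)
    (x y : EuclideanSpace ℝ (Fin d))
    (hxy : A *ᵥ (x : Fin d → ℝ) = (x : Fin d → ℝ) - (y : Fin d → ℝ)) :
    ‖x‖ ≤ 2 * ‖P‖ * ‖y‖ := by
  have hkey := stmt11_key d A P hP hlyap x y hxy
  have hdot : ((x : Fin d → ℝ)) ⬝ᵥ (x : Fin d → ℝ) = ‖x‖ ^ 2 := by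
    rw [EuclideanSpace.norm_eq, Real.sq_sqrt (by positivity)]
    simp [dotProduct, Real.norm_eq_abs, sq_abs, sq]
  have hPy : (0:ℝ) ≤ (y : Fin d → ℝ) ⬝ᵥ (P *ᵥ (y : Fin d → ℝ)) := by
    simpa using hP.dotProduct_mulVec_nonneg y
  have hcs : (x : Fin d → ℝ) ⬝ᵥ (P *ᵥ (y : Fin d → ℝ)) ≤ ‖x‖ * (‖P‖ * ‖y‖) := by
    have h1 : (x : Fin d → ℝ) ⬝ᵥ (P *ᵥ (y : Fin d → ℝ))
        = ⟪x, (EuclideanSpace.equiv (Fin d) ℝ).symm (P *ᵥ (y : Fin d → ℝ))⟫_ℝ := by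
      simp [PiLp.inner_apply, dotProduct, mul_comm]
    rw [h1]
    calc ⟪x, (EuclideanSpace.equiv (Fin d) ℝ).symm (P *ᵥ (y : Fin d → ℝ))⟫_ℝ
        ≤ ‖x‖ * ‖(EuclideanSpace.equiv (Fin d) ℝ).symm (P *ᵥ (y : Fin d → ℝ))‖ :=
          real_inner_le_norm _ _
      _ ≤ ‖x‖ * (‖P‖ * ‖y‖) := by
          exact mul_le_mul_of_nonneg_left (P.l2_opNorm_mulVec y) (norm_nonneg x)
  have hsq : ‖x‖ ^ 2 ≤ 2 * (‖x‖ * (‖P‖ * ‖y‖)) := by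
    rw [← hdot]
    calc (x : Fin d → ℝ) ⬝ᵥ (x : Fin d → ℝ)
        = 2 * ((x : Fin d → ℝ) ⬝ᵥ (P *ᵥ (y : Fin d → ℝ)))
          - (y : Fin d → ℝ) ⬝ᵥ (P *ᵥ (y : Fin d → ℝ)) := hkey
      _ ≤ 2 * ((x : Fin d → ℝ) ⬝ᵥ (P *ᵥ (y : Fin d → ℝ))) := by linarith
      _ ≤ 2 * (‖x‖ * (‖P‖ * ‖y‖)) := by linarith
  rcases eq_or_lt_of_le (norm_nonneg x) with h0 | h0
  · rw [← h0]
    positivity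
  · nlinarith [norm_nonneg y, norm_nonneg P]

/-- Proposition 4.2: stability implies invertibility.  If `P ⪰ 0` solves the
discrete Lyapunov equation `P = AᵀPA + I`, then `I − A` is invertible and
`‖(I − A)⁻¹‖ ≤ 2·cond(P)^{1/2}·‖P‖` where `cond(P) = ‖P‖·‖P⁻¹‖`. -/
theorem stmt_11 (d : ℕ) (A P : Matrix (Fin d) (Fin d) ℝ)
    (hP : P.PosSemidef) (hlyap : P = Aᵀ * P * A + 1) :
    IsUnit (1 - A).det ∧
      ‖(1 - A)⁻¹‖ ≤ 2 * Real.sqrt (‖P‖ * ‖P⁻¹‖) * ‖P‖ := by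
  rcases Nat.eq_zero_or_pos d with hd | hd
  · subst hd
    constructor
    · simp [Matrix.det_isEmpty]
    · have h1 : (1 - A)⁻¹ = 0 := Subsingleton.elim _ _
      have h2 : P = 0 := Subsingleton.elim _ _
      have h3 : P⁻¹ = 0 := Subsingleton.elim _ _
      rw [h1, h3, h2]
      simp
  -- d ≥ 1
  haveI : NeZero d := ⟨hd.ne'⟩
  -- invertibility of 1 - A
  have hdet : IsUnit (1 - A).det := by
    rw [isUnit_iff_ne_zero]
    intro hdet0
    obtain ⟨v, hv, hv0⟩ := (Matrix.exists_mulVec_eq_zero_iff).mpr hdet0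
    have hAv : A *ᵥ v = v - 0 := by
      have h : v - A *ᵥ v = 0 := by
        have := hv0
        rwa [Matrix.sub_mulVec, Matrix.one_mulVec] at this
      rw [sub_zero]
      exact (sub_eq_zero.mp h).symm
    have := stmt11_key d A P hP hlyap v 0 hAv
    simp only [Matrix.mulVec_zero, dotProduct_zero, zero_dotProduct,
      mul_zero, sub_zero] at this
    exact hv (dotProduct_self_eq_zero.mp this)
  refine ⟨hdet, ?_⟩
  -- the norm bound ‖(1-A)⁻¹‖ ≤ 2‖P‖
  have hmain : ‖(1 - A)⁻¹‖ ≤ 2 * ‖P‖ := by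
    rw [Matrix.cstar_norm_def]
    refine ContinuousLinearMap.opNorm_le_bound _ (by positivity) fun y => ?_
    set x : EuclideanSpace ℝ (Fin d) := toEuclideanCLM (𝕜 := ℝ) (1 - A)⁻¹ y with hx
    have hxv : (x : Fin d → ℝ) = (1 - A)⁻¹ *ᵥ (y : Fin d → ℝ) := rfl
    have hsolve : (1 - A) *ᵥ (x : Fin d → ℝ) = (y : Fin d → ℝ) := by
      rw [hxv, Matrix.mulVec_mulVec, Matrix.mul_nonsing_inv _ hdet, Matrix.one_mulVec]
    have hxy : A *ᵥ (x : Fin d → ℝ) = (x : Fin d → ℝ) - (y : Fin d → ℝ) := by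
      rw [← hsolve, Matrix.sub_mulVec, Matrix.one_mulVec]
      exact (sub_sub_cancel _ _).symm
    exact stmt11_bound d A P hP hlyap x y hxy
  -- cond(P) ≥ 1
  have hPdef : P.PosDef := by
    have hQ : (Aᵀ * P * A).PosSemidef := by
      have := hP.conjTranspose_mul_mul_same A
      rwa [conjTranspose_eq_transpose_of_trivial] at this
    rw [hlyap]
    exact Matrix.PosDef.posSemidef_add hQ Matrix.PosDef.one
  have hPinv : P * P⁻¹ = 1 :=
    Matrix.mul_nonsing_inv _ (isUnit_iff_ne_zero.mpr hPdef.det_pos.ne')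
  have hone : ‖(1 : Matrix (Fin d) (Fin d) ℝ)‖ = 1 := by
    rw [Matrix.cstar_norm_def, _root_.map_one]
    exact ContinuousLinearMap.norm_id
  have hcond : 1 ≤ ‖P‖ * ‖P⁻¹‖ := by
    calc (1:ℝ) = ‖(1 : Matrix (Fin d) (Fin d) ℝ)‖ := hone.symm
      _ = ‖P * P⁻¹‖ := by rw [hPinv]
      _ ≤ ‖P‖ * ‖P⁻¹‖ := Matrix.l2_opNorm_mul P P⁻¹
  have hsqrt : 1 ≤ Real.sqrt (‖P‖ * ‖P⁻¹‖) := by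
    rw [show (1:ℝ) = Real.sqrt 1 from (Real.sqrt_one).symm]
    exact Real.sqrt_le_sqrt hcond
  calc ‖(1 - A)⁻¹‖ ≤ 2 * ‖P‖ := hmain
    _ ≤ 2 * Real.sqrt (‖P‖ * ‖P⁻¹‖) * ‖P‖ := by
        nlinarith [norm_nonneg P]
end

section
/- Lemma A.1, first part (Lyapunov stability margin: geometric decay of matrix powers). Let A be a d×d real matrix and let P be a symmetric positive semidefinite d×d real matrix solving the discrete Lyapunov equation P = AᵀPA + I (so P ⪰ I and P is invertible). Then for every natural number k, ‖Aᵏ‖² ≤ cond(P)·(1 − 1/‖P‖)ᵏ, where cond(P) := ‖P‖·‖P⁻¹‖. -/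
open scoped Matrix.Norms.L2Operator
open Matrix
open scoped MatrixOrder

private noncomputable def eE (d : ℕ) (v : Fin d → ℝ) : EuclideanSpace ℝ (Fin d) :=
  (WithLp.equiv 2 (Fin d → ℝ)).symm v

private lemma eE_norm_sq {d : ℕ} (v : Fin d → ℝ) : ‖eE d v‖ ^ 2 = v ⬝ᵥ v := by
  rw [eE, ← real_inner_self_eq_norm_sq]; change v ⬝ᵥ star v = _; rw [star_trivial]

private lemma eE_mulVec {d : ℕ} (M : Matrix (Fin d) (Fin d) ℝ) (v : Fin d → ℝ) :
    ‖eE d (M *ᵥ v)‖ ≤ ‖M‖ * ‖eE d v‖ :=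
  M.l2_opNorm_mulVec (eE d v)

private lemma eE_opNorm_le {d : ℕ} (M : Matrix (Fin d) (Fin d) ℝ) {c : ℝ} (hc : 0 ≤ c)
    (h : ∀ v : Fin d → ℝ, ‖eE d (M *ᵥ v)‖ ≤ c * ‖eE d v‖) : ‖M‖ ≤ c := by
  rw [Matrix.l2_opNorm_def]
  refine ContinuousLinearMap.opNorm_le_bound _ hc fun x => ?_
  have := h (WithLp.equiv 2 _ x)
  simp only [eE] at this
  rwa [(WithLp.equiv 2 _).symm_apply_apply] at this

private lemma aux_quad {d : ℕ} (A B : Matrix (Fin d) (Fin d) ℝ) (y : Fin d → ℝ) :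
    (A *ᵥ y) ⬝ᵥ (B *ᵥ (A *ᵥ y)) = y ⬝ᵥ ((Aᵀ * B * A) *ᵥ y) := by
  rw [Matrix.mulVec_mulVec, Matrix.dotProduct_mulVec, Matrix.dotProduct_mulVec,
    ← Matrix.vecMul_transpose, Matrix.vecMul_vecMul, Matrix.mul_assoc]

private lemma dotProduct_self_pos' {d : ℕ} {v : Fin d → ℝ} (hv : v ≠ 0) : 0 < v ⬝ᵥ v := by
  have h1 : v ⬝ᵥ v ≠ 0 := fun h => hv (dotProduct_self_eq_zero.mp h)
  have h2 : (0:ℝ) ≤ v ⬝ᵥ v := Finset.sum_nonneg fun i _ => mul_self_nonneg _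
  exact lt_of_le_of_ne h2 (Ne.symm h1)

/-- Lemma A.1, first part (Lyapunov stability margin): if `P ⪰ 0` solves the
discrete Lyapunov equation `P = AᵀPA + I`, then the powers of `A` decay
geometrically: `‖Aᵏ‖² ≤ cond(P)·(1 − 1/‖P‖)ᵏ` with `cond(P) = ‖P‖·‖P⁻¹‖`. -/
theorem stmt_14 (d : ℕ) (A P : Matrix (Fin d) (Fin d) ℝ)
    (hP : P.PosSemidef) (hlyap : P = Aᵀ * P * A + 1) :
    ∀ k : ℕ, ‖A ^ k‖ ^ 2 ≤ (‖P‖ * ‖P⁻¹‖) * (1 - 1 / ‖P‖) ^ k := by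
  intro k
  rcases Nat.eq_zero_or_pos d with hd | hd
  · subst hd
    have h0 : ∀ M : Matrix (Fin 0) (Fin 0) ℝ, M = 0 := fun M => by
      ext i j; exact i.elim0
    rw [h0 (A ^ k), h0 (P⁻¹), h0 P]
    simp
  -- main case d > 0
  have hAPA : Aᵀ * P * A = P - 1 := eq_sub_iff_add_eq.mpr hlyap.symm
  -- positivity of the quadratic form
  have hq0 : ∀ v : Fin d → ℝ, 0 ≤ v ⬝ᵥ (P *ᵥ v) := fun v => by
    simpa using hP.dotProduct_mulVec_nonneg v
  -- step identity
  have step : ∀ y : Fin d → ℝ,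
      (A *ᵥ y) ⬝ᵥ (P *ᵥ (A *ᵥ y)) = y ⬝ᵥ (P *ᵥ y) - y ⬝ᵥ y := by
    intro y
    rw [aux_quad A P y, hAPA, Matrix.sub_mulVec, Matrix.one_mulVec, dotProduct_sub]
  have F7a : ∀ v : Fin d → ℝ, v ⬝ᵥ v ≤ v ⬝ᵥ (P *ᵥ v) := fun v => by
    have h1 := step v
    have h2 := hq0 (A *ᵥ v)
    linarith
  -- upper bound via the operator norm
  have F6 : ∀ v : Fin d → ℝ, v ⬝ᵥ (P *ᵥ v) ≤ ‖P‖ * ‖eE d v‖ ^ 2 := by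
    intro v
    calc v ⬝ᵥ (P *ᵥ v) = (inner ℝ (eE d v) (eE d (P *ᵥ v)) : ℝ) := by
          simp only [eE]
          change _ = (P *ᵥ v) ⬝ᵥ star v; rw [star_trivial, dotProduct_comm]
      _ ≤ ‖eE d v‖ * ‖eE d (P *ᵥ v)‖ := real_inner_le_norm _ _
      _ ≤ ‖eE d v‖ * (‖P‖ * ‖eE d v‖) :=
          mul_le_mul_of_nonneg_left (eE_mulVec P v) (norm_nonneg _)
      _ = ‖P‖ * ‖eE d v‖ ^ 2 := by ring
  -- ‖P‖ ≥ 1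
  have hP1 : 1 ≤ ‖P‖ := by
    set v0 : Fin d → ℝ := Pi.single ⟨0, hd⟩ 1 with hv0
    have hd0 : v0 ⬝ᵥ v0 = 1 := by
      rw [dotProduct_single, hv0, Pi.single_eq_same, mul_one]
    have h1 := F7a v0
    have h2 := F6 v0
    rw [eE_norm_sq, hd0] at h2
    rw [hd0] at h1
    linarith
  have hPpos : (0:ℝ) < ‖P‖ := lt_of_lt_of_le one_pos hP1
  have hr0 : (0:ℝ) ≤ 1 - 1 / ‖P‖ := by
    have : 1 / ‖P‖ ≤ 1 := by rw [div_le_one hPpos]; exact hP1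
    linarith
  -- P is positive definite, hence invertible
  have hPD : P.PosDef := by
    refine Matrix.PosDef.of_dotProduct_mulVec_pos hP.1 fun v hv => ?_
    have h1 := F7a v
    have h2 := dotProduct_self_pos' hv
    simpa using lt_of_lt_of_le h2 h1
  -- square root
  set S := CFC.sqrt P with hSdef
  have hS : S.PosSemidef := (CFC.sqrt_nonneg P).posSemidef
  have hSS : S * S = P := CFC.sqrt_mul_sqrt_self P hP.nonneg
  have hSdet : IsUnit S.det := by
    have hPu : IsUnit P.det := (Matrix.isUnit_iff_isUnit_det P).mp hPD.isUnit
    rw [← hSS, Matrix.det_mul] at hPu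
    exact (IsUnit.mul_iff.mp hPu).1
  have hSinv : S⁻¹ * S = 1 := Matrix.nonsing_inv_mul _ hSdet
  have hStrans : Sᵀ = S := by
    rw [← Matrix.conjTranspose_eq_transpose_of_trivial]; exact hS.1
  have F9 : ∀ v : Fin d → ℝ, ‖eE d (S *ᵥ v)‖ ^ 2 = v ⬝ᵥ (P *ᵥ v) := by
    intro v
    have h1 := aux_quad S 1 v
    rw [Matrix.one_mulVec, Matrix.mul_one, hStrans, hSS] at h1
    rw [eE_norm_sq, h1]
  have F10 : ∀ v : Fin d → ℝ, ‖eE d v‖ ≤ ‖S⁻¹‖ * ‖eE d (S *ᵥ v)‖ := by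
    intro v
    have hv : S⁻¹ *ᵥ (S *ᵥ v) = v := by
      rw [Matrix.mulVec_mulVec, hSinv, Matrix.one_mulVec]
    calc ‖eE d v‖ = ‖eE d (S⁻¹ *ᵥ (S *ᵥ v))‖ := by rw [hv]
      _ ≤ ‖S⁻¹‖ * ‖eE d (S *ᵥ v)‖ := eE_mulVec _ _
  have F11 : ‖S⁻¹‖ * ‖S⁻¹‖ = ‖P⁻¹‖ := by
    have h1 : P⁻¹ = S⁻¹ * S⁻¹ := by rw [← hSS, Matrix.mul_inv_rev]
    have h2 : (S⁻¹)ᴴ = S⁻¹ := hS.1.inv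
    rw [h1, ← Matrix.l2_opNorm_conjTranspose_mul_self (S⁻¹), h2]
  -- geometric decay of the quadratic form
  have key : ∀ (v : Fin d → ℝ) (j : ℕ),
      (A ^ j *ᵥ v) ⬝ᵥ (P *ᵥ (A ^ j *ᵥ v)) ≤ (1 - 1/‖P‖) ^ j * (v ⬝ᵥ (P *ᵥ v)) := by
    intro v j
    induction j with
    | zero => simp [Matrix.one_mulVec]
    | succ j ih =>
      have hy : A ^ (j+1) *ᵥ v = A *ᵥ (A ^ j *ᵥ v) := by
        rw [pow_succ', ← Matrix.mulVec_mulVec]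
      set y := A ^ j *ᵥ v with hydef
      have h1 := step y
      have h2 : y ⬝ᵥ (P *ᵥ y) ≤ ‖P‖ * (y ⬝ᵥ y) := by
        have := F6 y; rwa [eE_norm_sq] at this
      have h3 : y ⬝ᵥ (P *ᵥ y) / ‖P‖ ≤ y ⬝ᵥ y := (div_le_iff₀ hPpos).mpr (by linarith)
      have h4 : (A *ᵥ y) ⬝ᵥ (P *ᵥ (A *ᵥ y)) ≤ (1 - 1/‖P‖) * (y ⬝ᵥ (P *ᵥ y)) := by
        rw [h1]
        have : (1 - 1/‖P‖) * (y ⬝ᵥ (P *ᵥ y)) = y ⬝ᵥ (P *ᵥ y) - y ⬝ᵥ (P *ᵥ y) / ‖P‖ := by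
          ring
        rw [this]
        linarith
      calc (A ^ (j+1) *ᵥ v) ⬝ᵥ (P *ᵥ (A ^ (j+1) *ᵥ v))
          = (A *ᵥ y) ⬝ᵥ (P *ᵥ (A *ᵥ y)) := by rw [hy]
        _ ≤ (1 - 1/‖P‖) * (y ⬝ᵥ (P *ᵥ y)) := h4
        _ ≤ (1 - 1/‖P‖) * ((1 - 1/‖P‖) ^ j * (v ⬝ᵥ (P *ᵥ v))) :=
            mul_le_mul_of_nonneg_left ih hr0
        _ = (1 - 1/‖P‖) ^ (j+1) * (v ⬝ᵥ (P *ᵥ v)) := by ring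
  -- combine
  set C : ℝ := (‖P‖ * ‖P⁻¹‖) * (1 - 1 / ‖P‖) ^ k with hCdef
  have hC0 : 0 ≤ C := by
    apply mul_nonneg (mul_nonneg hPpos.le (norm_nonneg _)) (pow_nonneg hr0 k)
  have main : ∀ v : Fin d → ℝ, ‖eE d (A ^ k *ᵥ v)‖ ^ 2 ≤ C * ‖eE d v‖ ^ 2 := by
    intro v
    set y := A ^ k *ᵥ v with hydef
    have h1 : ‖eE d y‖ ^ 2 ≤ ‖S⁻¹‖ ^ 2 * ‖eE d (S *ᵥ y)‖ ^ 2 := by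
      have := F10 y
      calc ‖eE d y‖ ^ 2 ≤ (‖S⁻¹‖ * ‖eE d (S *ᵥ y)‖) ^ 2 :=
            pow_le_pow_left₀ (norm_nonneg _) this 2
        _ = ‖S⁻¹‖ ^ 2 * ‖eE d (S *ᵥ y)‖ ^ 2 := by ring
    have h2 : ‖eE d (S *ᵥ y)‖ ^ 2 ≤ (1 - 1/‖P‖) ^ k * (v ⬝ᵥ (P *ᵥ v)) := by
      rw [F9]; exact key v k
    have h3 : v ⬝ᵥ (P *ᵥ v) ≤ ‖P‖ * ‖eE d v‖ ^ 2 := F6 v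
    have h4 : ‖S⁻¹‖ ^ 2 = ‖P⁻¹‖ := by rw [sq]; exact F11
    have h5 : (0:ℝ) ≤ ‖S⁻¹‖ ^ 2 := sq_nonneg _
    have h6 : (0:ℝ) ≤ (1 - 1/‖P‖) ^ k := pow_nonneg hr0 k
    calc ‖eE d y‖ ^ 2 ≤ ‖S⁻¹‖ ^ 2 * ‖eE d (S *ᵥ y)‖ ^ 2 := h1
      _ ≤ ‖S⁻¹‖ ^ 2 * ((1 - 1/‖P‖) ^ k * (v ⬝ᵥ (P *ᵥ v))) :=
          mul_le_mul_of_nonneg_left h2 h5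
      _ ≤ ‖S⁻¹‖ ^ 2 * ((1 - 1/‖P‖) ^ k * (‖P‖ * ‖eE d v‖ ^ 2)) := by
          apply mul_le_mul_of_nonneg_left _ h5
          exact mul_le_mul_of_nonneg_left h3 h6
      _ = (‖S⁻¹‖ ^ 2 * ‖P‖ * (1 - 1/‖P‖) ^ k) * ‖eE d v‖ ^ 2 := by ring
      _ = C * ‖eE d v‖ ^ 2 := by rw [h4, hCdef]; ring_nf
  have hop : ‖A ^ k‖ ≤ Real.sqrt C := by
    apply eE_opNorm_le _ (Real.sqrt_nonneg C)
    intro v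
    have h1 := main v
    calc ‖eE d (A ^ k *ᵥ v)‖ = Real.sqrt (‖eE d (A ^ k *ᵥ v)‖ ^ 2) :=
          (Real.sqrt_sq (norm_nonneg _)).symm
      _ ≤ Real.sqrt (C * ‖eE d v‖ ^ 2) := Real.sqrt_le_sqrt h1
      _ = Real.sqrt C * Real.sqrt (‖eE d v‖ ^ 2) := Real.sqrt_mul hC0 _
      _ = Real.sqrt C * ‖eE d v‖ := by rw [Real.sqrt_sq (norm_nonneg _)]
  calc ‖A ^ k‖ ^ 2 ≤ Real.sqrt C ^ 2 := pow_le_pow_left₀ (norm_nonneg _) hop 2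
    _ = C := Real.sq_sqrt hC0
end

section
/- Lemma A.1, second part (robustness of the Lyapunov stability margin to perturbations). Let A be a d×d real matrix and let P be a symmetric positive semidefinite d×d real matrix solving the discrete Lyapunov equation P = AᵀPA + I (so P ⪰ I and P is invertible). Let Δ be any d×d real matrix with ‖Δ‖ ≤ 1/(6‖P‖²). Then for every natural number k, ‖(A + Δ)ᵏ‖² ≤ cond(P)·(1 − 1/(2‖P‖))ᵏ, where cond(P) := ‖P‖·‖P⁻¹‖. -/
open scoped Matrix.Norms.L2Operator InnerProductSpace
open Matrix

private lemma aux_le_of_sq_le_sq {a b : ℝ} (ha : 0 ≤ a) (hb : 0 ≤ b)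
    (h : a ^ 2 ≤ b ^ 2) : a ≤ b := by nlinarith [sq_nonneg (a - b), sq_nonneg (a + b)]

set_option maxHeartbeats 2000000 in
/-- Lemma A.1, second part (robustness of the Lyapunov stability margin): if
`P ⪰ 0` solves `P = AᵀPA + I` and `‖Δ‖ ≤ 1/(6‖P‖²)`, then
`‖(A + Δ)ᵏ‖² ≤ cond(P)·(1 − 1/(2‖P‖))ᵏ` with `cond(P) = ‖P‖·‖P⁻¹‖`. -/
theorem stmt_15 (d : ℕ) (A P Δ : Matrix (Fin d) (Fin d) ℝ)
    (hP : P.PosSemidef) (hlyap : P = Aᵀ * P * A + 1)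
    (hΔ : ‖Δ‖ ≤ 1 / (6 * ‖P‖ ^ 2)) :
    ∀ k : ℕ, ‖(A + Δ) ^ k‖ ^ 2 ≤ (‖P‖ * ‖P⁻¹‖) * (1 - 1 / (2 * ‖P‖)) ^ k := by
  intro k
  rcases Nat.eq_zero_or_pos d with hd | hd
  · subst hd
    have h1 : (A + Δ) ^ k = 0 := Subsingleton.elim _ _
    have h2 : P = 0 := Subsingleton.elim _ _
    simp [h1, h2]
  -- main case
  set T := Matrix.toEuclideanCLM (n := Fin d) (𝕜 := ℝ) with hT
  have hnorm : ∀ X : Matrix (Fin d) (Fin d) ℝ, ‖X‖ = ‖T X‖ := fun _ => rfl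
  have key0 : ∀ (X : Matrix (Fin d) (Fin d) ℝ) (y : EuclideanSpace ℝ (Fin d)),
      ⟪y, T X y⟫_ℝ = dotProduct (star (WithLp.equiv 2 _ y)) (X *ᵥ (WithLp.equiv 2 _ y)) :=
    fun _ _ => by rw [EuclideanSpace.inner_eq_star_dotProduct, dotProduct_comm]; rfl
  have hQ0 : ∀ y : EuclideanSpace ℝ (Fin d), 0 ≤ ⟪y, T P y⟫_ℝ := fun y => by
    rw [key0]; exact hP.dotProduct_mulVec_nonneg _
  have hL : T P = star (T A) * T P * T A + 1 := by
    conv_lhs => rw [hlyap]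
    rw [map_add, _root_.map_mul, _root_.map_mul, ← conjTranspose_eq_transpose_of_trivial,
      ← star_eq_conjTranspose, map_star, _root_.map_one]
  have hQiden : ∀ x : EuclideanSpace ℝ (Fin d),
      ⟪x, T P x⟫_ℝ = ⟪T A x, T P (T A x)⟫_ℝ + ‖x‖ ^ 2 := by
    intro x
    conv_lhs => rw [hL]
    rw [ContinuousLinearMap.add_apply, ContinuousLinearMap.one_apply, inner_add_right,
      ContinuousLinearMap.mul_apply, ContinuousLinearMap.mul_apply,
      ContinuousLinearMap.star_eq_adjoint, ContinuousLinearMap.adjoint_inner_right,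
      real_inner_self_eq_norm_sq]
  have hQlower : ∀ x : EuclideanSpace ℝ (Fin d), ‖x‖ ^ 2 ≤ ⟪x, T P x⟫_ℝ := by
    intro x
    have := hQ0 (T A x)
    rw [hQiden x]; linarith
  have hQupper : ∀ x : EuclideanSpace ℝ (Fin d), ⟪x, T P x⟫_ℝ ≤ ‖P‖ * ‖x‖ ^ 2 := by
    intro x
    calc ⟪x, T P x⟫_ℝ ≤ ‖x‖ * ‖T P x‖ := real_inner_le_norm _ _
      _ ≤ ‖x‖ * (‖T P‖ * ‖x‖) := by
          exact mul_le_mul_of_nonneg_left ((T P).le_opNorm x) (norm_nonneg x)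
      _ = ‖P‖ * ‖x‖ ^ 2 := by rw [← hnorm]; ring
  have hP1 : 1 ≤ ‖P‖ := by
    set x : EuclideanSpace ℝ (Fin d) := EuclideanSpace.single ⟨0, hd⟩ (1 : ℝ) with hx
    have hxn : ‖x‖ = 1 := by simp [hx]
    have h1 := hQlower x
    have h2 := hQupper x
    rw [hxn] at h1 h2; nlinarith
  have hPpos : (0 : ℝ) < ‖P‖ := lt_of_lt_of_le one_pos hP1
  have hAle : ∀ x : EuclideanSpace ℝ (Fin d), ‖T A x‖ ≤ ‖P‖ * ‖x‖ := by
    intro x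
    have h1 : ‖T A x‖ ^ 2 ≤ ⟪T A x, T P (T A x)⟫_ℝ := hQlower _
    have h2 := hQiden x
    have h3 := hQupper x
    refine aux_le_of_sq_le_sq (norm_nonneg _) (by positivity) ?_
    have hx2 : (0:ℝ) ≤ ‖x‖ ^ 2 := sq_nonneg _
    nlinarith [sq_nonneg ‖x‖]
  have hΔ6 : ‖Δ‖ ≤ 1 / 6 := by
    refine hΔ.trans ?_
    rw [div_le_div_iff₀ (by positivity) (by norm_num)]
    nlinarith
  have hPΔ : ‖P‖ ^ 2 * ‖Δ‖ ≤ 1 / 6 := by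
    have h := mul_le_mul_of_nonneg_right hΔ (sq_nonneg ‖P‖)
    have e : (1:ℝ) / (6 * ‖P‖ ^ 2) * ‖P‖ ^ 2 = 1 / 6 := by field_simp
    rw [e] at h; nlinarith
  set M : EuclideanSpace ℝ (Fin d) →L[ℝ] EuclideanSpace ℝ (Fin d) := T (A + Δ) with hM
  set ρ : ℝ := 1 - 1 / (2 * ‖P‖) with hρ
  have hρ0 : 0 ≤ ρ := by
    rw [hρ]
    have h : (1:ℝ) / (2 * ‖P‖) ≤ 1 / 2 := by
      rw [div_le_div_iff₀ (by linarith) (by norm_num)]; linarith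
    linarith
  have hstep : ∀ x : EuclideanSpace ℝ (Fin d), ⟪M x, T P (M x)⟫_ℝ ≤ ρ * ⟪x, T P x⟫_ℝ := by
    intro x
    have hMx : M x = T A x + T Δ x := by
      rw [hM, map_add, ContinuousLinearMap.add_apply]
    set a := T A x with ha
    set b := T Δ x with hb'
    have hPop : ∀ y : EuclideanSpace ℝ (Fin d), ‖T P y‖ ≤ ‖P‖ * ‖y‖ := fun y => by
      calc ‖T P y‖ ≤ ‖T P‖ * ‖y‖ := (T P).le_opNorm y
        _ = ‖P‖ * ‖y‖ := by rw [← hnorm]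
    have hb : ‖b‖ ≤ ‖Δ‖ * ‖x‖ := by
      calc ‖b‖ ≤ ‖T Δ‖ * ‖x‖ := (T Δ).le_opNorm x
        _ = ‖Δ‖ * ‖x‖ := by rw [← hnorm]
    have expand : ⟪M x, T P (M x)⟫_ℝ
        = ⟪a, T P a⟫_ℝ + ⟪a, T P b⟫_ℝ + ⟪b, T P a⟫_ℝ + ⟪b, T P b⟫_ℝ := by
      rw [hMx, map_add, inner_add_left, inner_add_right, inner_add_right]; ring
    have c1 : ⟪a, T P b⟫_ℝ ≤ (‖P‖ * ‖x‖) * (‖P‖ * (‖Δ‖ * ‖x‖)) := by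
      calc ⟪a, T P b⟫_ℝ ≤ ‖a‖ * ‖T P b‖ := real_inner_le_norm _ _
        _ ≤ (‖P‖ * ‖x‖) * (‖P‖ * (‖Δ‖ * ‖x‖)) := by
            refine mul_le_mul (hAle x) ((hPop b).trans ?_) (norm_nonneg _) (by positivity)
            exact mul_le_mul_of_nonneg_left hb (norm_nonneg _)
    have c2 : ⟪b, T P a⟫_ℝ ≤ (‖Δ‖ * ‖x‖) * (‖P‖ * (‖P‖ * ‖x‖)) := by
      calc ⟪b, T P a⟫_ℝ ≤ ‖b‖ * ‖T P a‖ := real_inner_le_norm _ _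
        _ ≤ (‖Δ‖ * ‖x‖) * (‖P‖ * (‖P‖ * ‖x‖)) := by
            refine mul_le_mul hb ((hPop a).trans ?_) (norm_nonneg _) (by positivity)
            exact mul_le_mul_of_nonneg_left (hAle x) (norm_nonneg _)
    have c3 : ⟪b, T P b⟫_ℝ ≤ (‖Δ‖ * ‖x‖) * (‖P‖ * (‖Δ‖ * ‖x‖)) := by
      calc ⟪b, T P b⟫_ℝ ≤ ‖b‖ * ‖T P b‖ := real_inner_le_norm _ _
        _ ≤ (‖Δ‖ * ‖x‖) * (‖P‖ * (‖Δ‖ * ‖x‖)) := by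
            refine mul_le_mul hb ((hPop b).trans ?_) (norm_nonneg _) (by positivity)
            exact mul_le_mul_of_nonneg_left hb (norm_nonneg _)
    have ha2 : ⟪a, T P a⟫_ℝ = ⟪x, T P x⟫_ℝ - ‖x‖ ^ 2 := by
      have := hQiden x; linarith
    have e1 : ‖P‖ ^ 2 * ‖Δ‖ * ‖x‖ ^ 2 ≤ 1 / 6 * ‖x‖ ^ 2 :=
      mul_le_mul_of_nonneg_right hPΔ (sq_nonneg _)
    have e3 : ‖P‖ * ‖Δ‖ ^ 2 * ‖x‖ ^ 2 ≤ 1 / 36 * ‖x‖ ^ 2 := by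
      nlinarith [sq_nonneg ‖x‖, norm_nonneg Δ, norm_nonneg P, sq_nonneg ‖Δ‖]
    have hρQ : ρ * ⟪x, T P x⟫_ℝ = ⟪x, T P x⟫_ℝ - 1 / (2 * ‖P‖) * ⟪x, T P x⟫_ℝ := by
      rw [hρ]; ring
    have Qhalf : 1 / (2 * ‖P‖) * ⟪x, T P x⟫_ℝ ≤ ‖x‖ ^ 2 / 2 := by
      have h := mul_le_mul_of_nonneg_left (hQupper x) (le_of_lt (by positivity : (0:ℝ) < 1 / (2 * ‖P‖)))
      have e : 1 / (2 * ‖P‖) * (‖P‖ * ‖x‖ ^ 2) = ‖x‖ ^ 2 / 2 := by field_simp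
      rw [e] at h; exact h
    have c1' : ⟪a, T P b⟫_ℝ ≤ 1 / 6 * ‖x‖ ^ 2 := c1.trans (by nlinarith [e1])
    have c2' : ⟪b, T P a⟫_ℝ ≤ 1 / 6 * ‖x‖ ^ 2 := c2.trans (by nlinarith [e1])
    have c3' : ⟪b, T P b⟫_ℝ ≤ 1 / 36 * ‖x‖ ^ 2 := c3.trans (by nlinarith [e3])
    rw [expand, ha2, hρQ]
    nlinarith [c1', c2', c3', Qhalf, sq_nonneg ‖x‖]
  have hiter : ∀ (n : ℕ) (x : EuclideanSpace ℝ (Fin d)),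
      ⟪(M ^ n) x, T P ((M ^ n) x)⟫_ℝ ≤ ρ ^ n * ⟪x, T P x⟫_ℝ := by
    intro n
    induction n with
    | zero => intro x; rw [pow_zero, ContinuousLinearMap.one_apply, pow_zero, one_mul]
    | succ n ih =>
      intro x
      have e1 : (M ^ (n + 1)) x = (M ^ n) (M x) := by
        rw [pow_succ, ContinuousLinearMap.mul_apply]
      rw [e1, pow_succ]
      calc ⟪(M ^ n) (M x), T P ((M ^ n) (M x))⟫_ℝ ≤ ρ ^ n * ⟪M x, T P (M x)⟫_ℝ := ih (M x)
        _ ≤ ρ ^ n * (ρ * ⟪x, T P x⟫_ℝ) :=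
            mul_le_mul_of_nonneg_left (hstep x) (pow_nonneg hρ0 n)
        _ = ρ ^ n * ρ * ⟪x, T P x⟫_ℝ := by ring
  -- invertibility and the lower bound via sqrt
  have hPd : P.PosDef := by
    refine Matrix.PosDef.of_dotProduct_mulVec_pos hP.1 fun x hx => ?_
    set y : EuclideanSpace ℝ (Fin d) := (WithLp.equiv 2 _).symm x with hy
    have h0 : ‖y‖ ^ 2 ≤ ⟪y, T P y⟫_ℝ := hQlower y
    have hk := key0 P y
    have hyx : (WithLp.equiv 2 (Fin d → ℝ)) y = x := Equiv.apply_symm_apply _ _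
    rw [hyx] at hk
    have hy0 : y ≠ 0 := fun h => hx (by rw [← hyx, h]; rfl)
    have hyn : 0 < ‖y‖ := norm_pos_iff.mpr hy0
    rw [← hk]
    nlinarith [h0]
  have hPdet : IsUnit P.det := hPd.det_pos.ne'.isUnit
  obtain ⟨S, hSps, hSS⟩ : ∃ S : Matrix (Fin d) (Fin d) ℝ, S.PosSemidef ∧ S * S = P :=
    by
      open scoped MatrixOrder in
      exact ⟨CFC.sqrt P, (CFC.sqrt_nonneg P).posSemidef, CFC.sqrt_mul_sqrt_self P hP.nonneg⟩
  have hSdet : IsUnit S.det := by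
    have h : IsUnit (S.det * S.det) := by rw [← det_mul, hSS]; exact hPdet
    exact isUnit_of_mul_isUnit_left h
  have hSinv : S⁻¹ * S = 1 := nonsing_inv_mul S hSdet
  have hSH : star S = S := by rw [star_eq_conjTranspose]; exact hSps.1
  have hSinvH : star S⁻¹ = S⁻¹ := by
    rw [star_eq_conjTranspose, conjTranspose_nonsing_inv, ← star_eq_conjTranspose, hSH]
  have hPinv : P⁻¹ = S⁻¹ * S⁻¹ := by rw [← hSS, Matrix.mul_inv_rev]
  have hnormPinv : ‖S⁻¹‖ * ‖S⁻¹‖ = ‖P⁻¹‖ := by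
    rw [← Matrix.l2_opNorm_conjTranspose_mul_self S⁻¹, ← star_eq_conjTranspose, hSinvH, ← hPinv]
  have hlow : ∀ y : EuclideanSpace ℝ (Fin d), ‖y‖ ^ 2 ≤ ‖P⁻¹‖ * ⟪y, T P y⟫_ℝ := by
    intro y
    have hy1 : T S⁻¹ (T S y) = y := by
      rw [← ContinuousLinearMap.mul_apply, ← _root_.map_mul, hSinv, _root_.map_one,
        ContinuousLinearMap.one_apply]
    have hy2 : ‖y‖ ≤ ‖S⁻¹‖ * ‖T S y‖ := by
      conv_lhs => rw [← hy1]
      calc ‖T S⁻¹ (T S y)‖ ≤ ‖T S⁻¹‖ * ‖T S y‖ := (T S⁻¹).le_opNorm _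
        _ = ‖S⁻¹‖ * ‖T S y‖ := by rw [← hnorm]
    have hy3 : ‖T S y‖ ^ 2 = ⟪y, T P y⟫_ℝ := by
      rw [← real_inner_self_eq_norm_sq]
      calc ⟪T S y, T S y⟫_ℝ = ⟪y, ContinuousLinearMap.adjoint (T S) (T S y)⟫_ℝ :=
          (ContinuousLinearMap.adjoint_inner_right _ _ _).symm
        _ = ⟪y, T P y⟫_ℝ := by
          rw [← ContinuousLinearMap.star_eq_adjoint, ← map_star, hSH,
            ← ContinuousLinearMap.mul_apply, ← _root_.map_mul, hSS]
    nlinarith [pow_le_pow_left₀ (norm_nonneg y) hy2 2, hy3, hnormPinv, sq_nonneg ‖T S y‖]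
  -- conclude
  have hMk : T ((A + Δ) ^ k) = M ^ k := by rw [map_pow, ← hM]
  have hc0 : 0 ≤ ‖P‖ * ‖P⁻¹‖ * ρ ^ k := by positivity
  have hbd : ∀ x : EuclideanSpace ℝ (Fin d),
      ‖(M ^ k) x‖ ^ 2 ≤ (‖P‖ * ‖P⁻¹‖ * ρ ^ k) * ‖x‖ ^ 2 := by
    intro x
    have h1 := hlow ((M ^ k) x)
    have h2 := hiter k x
    have h3 := hQupper x
    have h4 : (0:ℝ) ≤ ‖P⁻¹‖ := norm_nonneg _
    have h5 : (0:ℝ) ≤ ρ ^ k := pow_nonneg hρ0 k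
    calc ‖(M ^ k) x‖ ^ 2 ≤ ‖P⁻¹‖ * ⟪(M ^ k) x, T P ((M ^ k) x)⟫_ℝ := h1
      _ ≤ ‖P⁻¹‖ * (ρ ^ k * ⟪x, T P x⟫_ℝ) := mul_le_mul_of_nonneg_left h2 h4
      _ ≤ ‖P⁻¹‖ * (ρ ^ k * (‖P‖ * ‖x‖ ^ 2)) :=
          mul_le_mul_of_nonneg_left (mul_le_mul_of_nonneg_left h3 h5) h4
      _ = (‖P‖ * ‖P⁻¹‖ * ρ ^ k) * ‖x‖ ^ 2 := by ring
  have hkn : ‖(A + Δ) ^ k‖ ≤ Real.sqrt (‖P‖ * ‖P⁻¹‖ * ρ ^ k) := by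
    rw [hnorm, hMk]
    refine ContinuousLinearMap.opNorm_le_bound _ (Real.sqrt_nonneg _) fun x => ?_
    refine aux_le_of_sq_le_sq (norm_nonneg _) (by positivity) ?_
    have := hbd x
    rw [mul_pow, Real.sq_sqrt hc0]
    exact this
  calc ‖(A + Δ) ^ k‖ ^ 2 ≤ Real.sqrt (‖P‖ * ‖P⁻¹‖ * ρ ^ k) ^ 2 :=
        pow_le_pow_left₀ (norm_nonneg _) hkn 2
    _ = ‖P‖ * ‖P⁻¹‖ * ρ ^ k := Real.sq_sqrt hc0
end

section
/- Lemma A.7 (growth of powers of a perturbed matrix). Let A be a d×d real matrix such that for some real numbers a > 0 and b > 0, ‖Aʲ‖ ≤ a·bʲ holds for every natural number j. Then for every d×d real matrix Δ and every natural number n, ‖(A + Δ)ⁿ‖ ≤ a·(b + a·‖Δ‖)ⁿ. -/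
open scoped Matrix.Norms.L2Operator
open Matrix

lemma pow_perturb' {R : Type*} [Ring R] (A Δ : R) :
    ∀ n : ℕ, (A + Δ) ^ n = A ^ n + ∑ j ∈ Finset.range n, A ^ j * Δ * (A + Δ) ^ (n - 1 - j) := by
  intro n
  induction n with
  | zero => simp
  | succ n ih =>
    have h1 : (A + Δ) ^ (n + 1) = A * (A + Δ) ^ n + Δ * (A + Δ) ^ n := by
      rw [pow_succ', add_mul]
    rw [h1]
    conv_lhs => rw [ih]
    rw [mul_add, Finset.mul_sum, ← ih, Finset.sum_range_succ']
    simp only [Nat.add_sub_cancel, Nat.sub_zero, pow_zero, one_mul]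
    rw [pow_succ', add_assoc]
    congr 1
    congr 1
    apply Finset.sum_congr rfl
    intro j hj
    have h2 : n - (j + 1) = n - 1 - j := by omega
    rw [h2, pow_succ']; simp only [mul_assoc]

/-- Lemma A.7: if the powers of `A` satisfy `‖Aʲ‖ ≤ a·bʲ` for all `j`, then for
any perturbation `Δ`, the powers of `A + Δ` satisfy
`‖(A + Δ)ⁿ‖ ≤ a·(b + a·‖Δ‖)ⁿ`. -/
theorem stmt_17 (d : ℕ) (A : Matrix (Fin d) (Fin d) ℝ) (a b : ℝ)
    (ha : 0 < a) (hb : 0 < b) (hdecay : ∀ j : ℕ, ‖A ^ j‖ ≤ a * b ^ j) :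
    ∀ (Δ : Matrix (Fin d) (Fin d) ℝ) (n : ℕ),
      ‖(A + Δ) ^ n‖ ≤ a * (b + a * ‖Δ‖) ^ n := by
  intro Δ n
  induction n using Nat.strong_induction_on with
  | _ n ih =>
  have hΔ : (0:ℝ) ≤ ‖Δ‖ := norm_nonneg _
  have hc : (0:ℝ) < b + a * ‖Δ‖ := by positivity
  calc ‖(A + Δ) ^ n‖
      = ‖A ^ n + ∑ j ∈ Finset.range n, A ^ j * Δ * (A + Δ) ^ (n - 1 - j)‖ := by
        rw [pow_perturb' A Δ n]
    _ ≤ ‖A ^ n‖ + ∑ j ∈ Finset.range n, ‖A ^ j * Δ * (A + Δ) ^ (n - 1 - j)‖ :=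
        (norm_add_le _ _).trans (by gcongr; exact norm_sum_le _ _)
    _ ≤ a * b ^ n + ∑ j ∈ Finset.range n,
          (a * b ^ j) * ‖Δ‖ * (a * (b + a * ‖Δ‖) ^ (n - 1 - j)) := by
        apply add_le_add (hdecay n)
        apply Finset.sum_le_sum
        intro j hj
        have hjn : n - 1 - j < n := by
          have := Finset.mem_range.mp hj; omega
        calc ‖A ^ j * Δ * (A + Δ) ^ (n - 1 - j)‖
            ≤ ‖A ^ j * Δ‖ * ‖(A + Δ) ^ (n - 1 - j)‖ := norm_mul_le _ _
          _ ≤ (‖A ^ j‖ * ‖Δ‖) * ‖(A + Δ) ^ (n - 1 - j)‖ := by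
              gcongr; exact norm_mul_le _ _
          _ ≤ (a * b ^ j) * ‖Δ‖ * (a * (b + a * ‖Δ‖) ^ (n - 1 - j)) := by
              gcongr
              · exact hdecay j
              · exact ih _ hjn
    _ = a * (b + a * ‖Δ‖) ^ n := by
        have hg := geom_sum₂_mul b (b + a * ‖Δ‖) n
        have hsum : ∑ j ∈ Finset.range n,
            (a * b ^ j) * ‖Δ‖ * (a * (b + a * ‖Δ‖) ^ (n - 1 - j))
            = (a * ‖Δ‖ * a) * ∑ j ∈ Finset.range n, b ^ j * (b + a * ‖Δ‖) ^ (n - 1 - j) := by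
          rw [Finset.mul_sum]
          exact Finset.sum_congr rfl fun j _ => by ring
        rw [hsum]
        linear_combination (-a) * hg
end
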